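/- arXiv:1401.6252 — 3 statements merged into one kernel-verified Lean document; each statement's English description precedes it below -/
import Mathlib

section
/- Let C be a self-dual Z4-code of length 24 with minimum Lee weight 10. Then C is a Type I Z4-code and its minimum Euclidean weight is 12. Moreover, every codeword x of C with Lee weight 10 satisfies n_1(x) + n_3(x) = 8 and n_2(x) = 1. -/
open Finset

namespace Z4Note

variable {ι : Type*} [Fintype ι]

/-- Hamming weight of a binary vector. -/
def hWt (x : ι → ZMod 2) : ℕ := (Finset.univ.filter fun i => x i ≠ 0).card

/-- Lee value of an element of `ZMod 4`:  0 ↦ 0, 1 ↦ 1, 2 ↦ 2, 3 ↦ 1. -/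
def leeVal (a : ZMod 4) : ℕ := min a.val (4 - a.val)

/-- Lee weight `n₁(x) + 2 n₂(x) + n₃(x)`. -/
def leeWt (x : ι → ZMod 4) : ℕ := ∑ i, leeVal (x i)

/-- Euclidean weight `n₁(x) + 4 n₂(x) + n₃(x)`. -/
def eucWt (x : ι → ZMod 4) : ℕ := ∑ i, (leeVal (x i)) ^ 2

/-- Number of coordinates of `x` equal to `a`. -/
def nCount (a : ZMod 4) (x : ι → ZMod 4) : ℕ := (Finset.univ.filter fun i => x i = a).card

/-- Dual of a `ZMod 4`-code (as a set), w.r.t. the standard inner product. -/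
def dualZ4 (C : Set (ι → ZMod 4)) : Set (ι → ZMod 4) :=
  {x | ∀ y ∈ C, ∑ i, x i * y i = 0}

/-- Dual of a binary code (as a set), w.r.t. the standard inner product. -/
def dual2 (C : Set (ι → ZMod 2)) : Set (ι → ZMod 2) :=
  {x | ∀ y ∈ C, ∑ i, x i * y i = 0}

/-- A `ZMod 4`-code is self-dual if it equals its dual. -/
def SelfDualZ4 (C : Submodule (ZMod 4) (ι → ZMod 4)) : Prop :=
  (C : Set (ι → ZMod 4)) = dualZ4 (C : Set (ι → ZMod 4))

/-- A binary code is self-dual if it equals its dual. -/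
def SelfDual2 (D : Submodule (ZMod 2) (ι → ZMod 2)) : Prop :=
  (D : Set (ι → ZMod 2)) = dual2 (D : Set (ι → ZMod 2))

/-- Coordinatewise reduction modulo 2. -/
def res2 (x : ι → ZMod 4) : ι → ZMod 2 :=
  fun i => ZMod.castHom (by norm_num : (2:ℕ) ∣ 4) (ZMod 2) (x i)

/-- The residue code `C⁽¹⁾ = {c mod 2 : c ∈ C}`. -/
def residue (C : Set (ι → ZMod 4)) : Set (ι → ZMod 2) := res2 '' C

/-- Minimum Lee weight among nonzero codewords. -/
noncomputable def minLee (C : Set (ι → ZMod 4)) : ℕ := sInf {d | ∃ x ∈ C, x ≠ 0 ∧ leeWt x = d}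

/-- Minimum Euclidean weight among nonzero codewords. -/
noncomputable def minEuc (C : Set (ι → ZMod 4)) : ℕ := sInf {d | ∃ x ∈ C, x ≠ 0 ∧ eucWt x = d}

/-- Minimum Hamming weight among nonzero codewords of a binary code. -/
noncomputable def minHam (C : Set (ι → ZMod 2)) : ℕ := sInf {d | ∃ x ∈ C, x ≠ 0 ∧ hWt x = d}

/-- A binary code is doubly even if all weights are divisible by 4. -/
def DoublyEven (C : Set (ι → ZMod 2)) : Prop := ∀ x ∈ C, 4 ∣ hWt x

/-- A binary code is singly even if some codeword has weight not divisible by 4. -/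
def SinglyEven (C : Set (ι → ZMod 2)) : Prop := ∃ x ∈ C, ¬ 4 ∣ hWt x

/-- A self-dual `ZMod 4`-code is Type II if all Euclidean weights are divisible by 8. -/
def TypeII (C : Set (ι → ZMod 4)) : Prop := ∀ x ∈ C, 8 ∣ eucWt x

/-- The doubly even subcode of a binary code. -/
def evenSubcode (D : Set (ι → ZMod 2)) : Set (ι → ZMod 2) := {x ∈ D | 4 ∣ hWt x}

/-- The shadow `S = D₀^⊥ \ D` of a binary code. -/
def shadow (D : Set (ι → ZMod 2)) : Set (ι → ZMod 2) := dual2 (evenSubcode D) \ D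

/-- A binary singly even self-dual code is s-extremal if equality holds in the
Bachoc–Gaborit bound relating the minimum weight of the code and of its shadow. -/
def SExtremal (D : Submodule (ZMod 2) (ι → ZMod 2)) : Prop :=
  SelfDual2 D ∧ SinglyEven (D : Set (ι → ZMod 2)) ∧
  ((¬ (Fintype.card ι % 24 = 22 ∧
        minHam (D : Set (ι → ZMod 2)) = 4 * (Fintype.card ι / 24) + 6)) →
      minHam (shadow (D : Set (ι → ZMod 2))) + 2 * minHam (D : Set (ι → ZMod 2)) =
        Fintype.card ι / 2 + 4) ∧
  ((Fintype.card ι % 24 = 22 ∧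
        minHam (D : Set (ι → ZMod 2)) = 4 * (Fintype.card ι / 24) + 6) →
      minHam (shadow (D : Set (ι → ZMod 2))) + 2 * minHam (D : Set (ι → ZMod 2)) =
        Fintype.card ι / 2 + 8)

/-- Equivalence of `ZMod 4`-codes: coordinate permutation together with sign changes. -/
def Z4Equiv (C C' : Set (ι → ZMod 4)) : Prop :=
  ∃ σ : Equiv.Perm ι, ∃ ε : ι → ZMod 4, (∀ i, ε i = 1 ∨ ε i = -1) ∧
    C' = (fun x => fun i => ε i * x (σ i)) '' C

/-- Covering radius of a binary code. -/
noncomputable def covRad (C : Set (ι → ZMod 2)) : ℕ :=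
  sInf {R | ∀ v : ι → ZMod 2, ∃ c ∈ C, hWt (v - c) ≤ R}

/-- Entry `(i,j)` of the circulant matrix with first row `r`. -/
def circEntry {m : ℕ} (r : Fin m → ZMod 4) (i j : Fin m) : ZMod 4 := r (j - i)

/-- Entry `(i,j)` of the negacirculant matrix with first row `r`. -/
def negaEntry {m : ℕ} (r : Fin m → ZMod 4) (i j : Fin m) : ZMod 4 :=
  if i.val ≤ j.val then r (j - i) else - r (j - i)

/-- The bordered part `B` of the generator matrix of a bordered double circulant code. -/
def bdcB {m : ℕ} (α β γ : ZMod 4) (r : Fin m → ZMod 4) :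
    Fin (m+1) → Fin (m+1) → ZMod 4 :=
  Fin.cases (Fin.cases α fun _ => β) (fun i' => Fin.cases γ fun j' => circEntry r i' j')

/-- Row `i` of the generator matrix `(I | B)` of a bordered double circulant code. -/
def bdcRow {m : ℕ} (α β γ : ZMod 4) (r : Fin m → ZMod 4) (i : Fin (m+1)) :
    (Fin (m+1) ⊕ Fin (m+1)) → ZMod 4 :=
  Sum.elim (fun j => if j = i then 1 else 0) (bdcB α β γ r i)

/-- The bordered double circulant code of length `2(m+1)`. -/
def bdcCode {m : ℕ} (α β γ : ZMod 4) (r : Fin m → ZMod 4) :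
    Submodule (ZMod 4) ((Fin (m+1) ⊕ Fin (m+1)) → ZMod 4) :=
  Submodule.span (ZMod 4) (Set.range (bdcRow α β γ r))

/-- The block matrix `[[A, B], [-Bᵀ, Aᵀ]]` built from negacirculant `A`, `B`. -/
def fourNegaM {n : ℕ} (a b : Fin n → ZMod 4) :
    (Fin n ⊕ Fin n) → (Fin n ⊕ Fin n) → ZMod 4
  | Sum.inl i, Sum.inl j => negaEntry a i j
  | Sum.inl i, Sum.inr j => negaEntry b i j
  | Sum.inr i, Sum.inl j => - negaEntry b j i
  | Sum.inr i, Sum.inr j => negaEntry a j i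

/-- Row `i` of the generator matrix `(I | M)` of a four-negacirculant code. -/
def fourNegaRow {n : ℕ} (a b : Fin n → ZMod 4) (i : Fin n ⊕ Fin n) :
    ((Fin n ⊕ Fin n) ⊕ (Fin n ⊕ Fin n)) → ZMod 4 :=
  Sum.elim (fun j => if j = i then 1 else 0) (fourNegaM a b i)

/-- The four-negacirculant code of length `4n`. -/
def fourNegaCode {n : ℕ} (a b : Fin n → ZMod 4) :
    Submodule (ZMod 4) (((Fin n ⊕ Fin n) ⊕ (Fin n ⊕ Fin n)) → ZMod 4) :=
  Submodule.span (ZMod 4) (Set.range (fourNegaRow a b))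

end Z4Note

section Z4Aux
open Z4Note

variable {ι : Type*} [Fintype ι] [DecidableEq ι]
set_option linter.unusedSectionVars false
set_option linter.unusedTactic false

/-! ### Weight decompositions over `ZMod 4` -/

lemma Z4Aux.leeWt_eq (x : ι → ZMod 4) :
    leeWt x = (nCount 1 x + nCount 3 x) + 2 * nCount 2 x := by
  have h : ∀ a : ZMod 4, (leeVal a : ℕ) =
      ((if a = 1 then 1 else 0) + (if a = 3 then 1 else 0)) + 2*(if a = 2 then 1 else 0) := by
    decide
  unfold leeWt nCount
  simp_rw [h, Finset.sum_add_distrib, ← Finset.mul_sum, ← Finset.card_filter]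

lemma Z4Aux.eucWt_eq (x : ι → ZMod 4) :
    eucWt x = (nCount 1 x + nCount 3 x) + 4 * nCount 2 x := by
  have h : ∀ a : ZMod 4, (leeVal a)^2 =
      ((if a = 1 then 1 else 0) + (if a = 3 then 1 else 0)) + 4*(if a = 2 then 1 else 0) := by
    decide
  unfold eucWt nCount
  simp_rw [h, Finset.sum_add_distrib, ← Finset.mul_sum, ← Finset.card_filter]

lemma Z4Aux.selfmul (x : ι → ZMod 4) :
    ∑ i, x i * x i = ((nCount 1 x + nCount 3 x : ℕ) : ZMod 4) := by
  have h : ∀ a : ZMod 4, a * a =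
      ((if a = 1 then (1:ℕ) else 0) + (if a = 3 then (1:ℕ) else 0) : ℕ) := by decide
  simp_rw [h]
  push_cast
  rw [Finset.sum_add_distrib, Finset.sum_boole, Finset.sum_boole]
  unfold nCount
  push_cast
  ring

lemma Z4Aux.leeWt_two_smul (x : ι → ZMod 4) :
    leeWt ((2 : ZMod 4) • x) = 2 * (nCount 1 x + nCount 3 x) := by
  have h : ∀ a : ZMod 4, leeVal (2 * a) =
      2 * ((if a = 1 then (1:ℕ) else 0) + (if a = 3 then 1 else 0)) := by decide
  unfold leeWt nCount
  simp only [Pi.smul_apply, smul_eq_mul]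
  simp_rw [h, ← Finset.mul_sum, Finset.sum_add_distrib, Finset.sum_boole]
  push_cast
  ring

lemma Z4Aux.two_smul_eq_zero_iff (x : ι → ZMod 4) :
    (2 : ZMod 4) • x = 0 ↔ nCount 1 x + nCount 3 x = 0 := by
  have h : ∀ a : ZMod 4, 2 * a = 0 ↔ ¬(a = 1) ∧ ¬(a = 3) := by decide
  constructor
  · intro hz
    have htz := funext_iff.mp hz
    simp only [Pi.smul_apply, smul_eq_mul, Pi.zero_apply] at htz
    unfold nCount
    rw [Nat.add_eq_zero]
    refine ⟨?_, ?_⟩ <;>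
      [ skip; skip] <;> rw [Finset.card_eq_zero, Finset.filter_eq_empty_iff] <;> intro i _
    · exact ((h (x i)).mp (htz i)).1
    · exact ((h (x i)).mp (htz i)).2
  · intro hz
    unfold nCount at hz
    rw [Nat.add_eq_zero, Finset.card_eq_zero, Finset.card_eq_zero,
      Finset.filter_eq_empty_iff, Finset.filter_eq_empty_iff] at hz
    funext i
    simp only [Pi.smul_apply, smul_eq_mul, Pi.zero_apply]
    exact (h (x i)).mpr ⟨hz.1 (Finset.mem_univ i), hz.2 (Finset.mem_univ i)⟩

/-! ### Krawtchouk-type counting -/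

def Z4Aux.Kint (n j w : ℕ) : ℤ :=
  ∑ s ∈ Finset.range (j+1), (-1)^s * (w.choose s) * ((n-w).choose (j-s))

def Z4Aux.inn (x b : ι → ZMod 2) : ZMod 2 := ∑ i, x i * b i

def Z4Aux.chi (x b : ι → ZMod 2) : ℤ := if Z4Aux.inn x b = 0 then 1 else -1

open Z4Aux

lemma Z4Aux.card_inter_filter (W : Finset ι) (j s : ℕ) (hs : s ≤ j) :
    (((univ : Finset ι).powersetCard j).filter fun X => (X ∩ W).card = s).card
      = (W.card.choose s) * ((Wᶜ).card.choose (j - s)) := by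
  rw [← Finset.card_powersetCard, ← Finset.card_powersetCard, ← Finset.card_product]
  apply Finset.card_bij' (fun X _ => (X ∩ W, X \ W)) (fun p _ => p.1 ∪ p.2)
  · rintro X hX
    simp only [Finset.mem_filter, Finset.mem_powersetCard_univ] at hX
    obtain ⟨hcard, hints⟩ := hX
    have hd : (X ∩ W).card + (X \ W).card = X.card := Finset.card_inter_add_card_sdiff X W
    simp only [Finset.mem_product, Finset.mem_powersetCard]
    refine ⟨⟨Finset.inter_subset_right, hints⟩, ?_, ?_⟩
    · intro i hi
      simp only [Finset.mem_sdiff] at hi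
      exact Finset.mem_compl.mpr hi.2
    · omega
  · rintro ⟨A, B⟩ hp
    simp only [Finset.mem_product, Finset.mem_powersetCard] at hp
    obtain ⟨⟨hAW, hA⟩, hBW, hB⟩ := hp
    have hdisj : Disjoint A B := by
      refine Finset.disjoint_left.mpr fun a ha hb => ?_
      exact (Finset.mem_compl.mp (hBW hb)) (hAW ha)
    have hAuW : (A ∪ B) ∩ W = A := by
      ext a
      simp only [Finset.mem_inter, Finset.mem_union]
      constructor
      · rintro ⟨h1 | h1, h2⟩
        · exact h1
        · exact absurd h2 (Finset.mem_compl.mp (hBW h1))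
      · intro ha; exact ⟨Or.inl ha, hAW ha⟩
    simp only [Finset.mem_filter, Finset.mem_powersetCard_univ]
    rw [Finset.card_union_of_disjoint hdisj, hAuW]
    exact ⟨by omega, hA⟩
  · intro X hX
    rw [Finset.union_comm]
    exact Finset.sdiff_union_inter X W
  · rintro ⟨A, B⟩ hp
    simp only [Finset.mem_product, Finset.mem_powersetCard] at hp
    obtain ⟨⟨hAW, hA⟩, hBW, hB⟩ := hp
    have hAuW : (A ∪ B) ∩ W = A := by
      ext a
      simp only [Finset.mem_inter, Finset.mem_union]
      constructor
      · rintro ⟨h1 | h1, h2⟩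
        · exact h1
        · exact absurd h2 (Finset.mem_compl.mp (hBW h1))
      · intro ha; exact ⟨Or.inl ha, hAW ha⟩
    have hAuB : (A ∪ B) \ W = B := by
      ext a
      simp only [Finset.mem_sdiff, Finset.mem_union]
      constructor
      · rintro ⟨h1 | h1, h2⟩
        · exact absurd (hAW h1) h2
        · exact h1
      · intro ha; exact ⟨Or.inr ha, Finset.mem_compl.mp (hBW ha)⟩
    simp [hAuW, hAuB]

lemma Z4Aux.sum_powersetCard_negone (W : Finset ι) (j : ℕ) :
    ∑ X ∈ (univ : Finset ι).powersetCard j, (-1:ℤ)^((X ∩ W).card)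
      = Kint (Fintype.card ι) j W.card := by
  rw [← Finset.sum_fiberwise_of_maps_to (g := fun X => (X ∩ W).card)
      (t := Finset.range (j+1)) ?hmap]
  case hmap =>
    intro X hX
    rw [Finset.mem_powersetCard_univ] at hX
    have := Finset.card_le_card (Finset.inter_subset_left (s₁ := X) (s₂ := W))
    show (X ∩ W).card ∈ Finset.range (j+1)
    rw [Finset.mem_range]
    omega
  unfold Kint
  apply Finset.sum_congr rfl
  intro s hs
  rw [Finset.mem_range] at hs
  have hcong : ∀ X ∈ ((univ : Finset ι).powersetCard j).filter fun X => (X ∩ W).card = s,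
      (-1:ℤ)^((X ∩ W).card) = (-1:ℤ)^s := by
    intro X hX
    rw [Finset.mem_filter] at hX
    rw [hX.2]
  rw [Finset.sum_congr rfl hcong, Finset.sum_const, Z4Aux.card_inter_filter W j s (by omega)]
  rw [Finset.card_compl]
  ring

lemma Z4Aux.inn_eq_card (x b : ι → ZMod 2) :
    inn x b = ((((univ.filter fun i => x i ≠ 0) ∩ (univ.filter fun i => b i ≠ 0)).card : ℕ)
      : ZMod 2) := by
  classical
  have h : ∀ s t : ZMod 2, s * t = if s ≠ 0 ∧ t ≠ 0 then (1 : ZMod 2) else 0 := by decide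
  unfold inn
  simp_rw [h]
  rw [Finset.sum_boole, ← Finset.filter_and]

lemma Z4Aux.chi_eq_pow (x b : ι → ZMod 2) :
    chi x b
      = (-1:ℤ)^(((univ.filter fun i => x i ≠ 0) ∩ (univ.filter fun i => b i ≠ 0)).card) := by
  unfold chi
  rw [Z4Aux.inn_eq_card x b]
  set m := ((univ.filter fun i => x i ≠ 0) ∩ (univ.filter fun i => b i ≠ 0)).card
  rcases Nat.even_or_odd m with he | ho
  · rw [if_pos, he.neg_one_pow]
    rw [(ZMod.natCast_eq_zero_iff m 2)]
    exact he.two_dvd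
  · rw [if_neg, ho.neg_one_pow]
    rw [(ZMod.natCast_eq_zero_iff m 2)]
    intro h2
    exact (Nat.not_even_iff_odd.mpr ho) (even_iff_two_dvd.mpr h2)

lemma Z4Aux.sum_chi_eq_kint (b : ι → ZMod 2) (j : ℕ) :
    ∑ x ∈ (univ : Finset (ι → ZMod 2)).filter (fun x => hWt x = j), chi x b
      = Kint (Fintype.card ι) j (hWt b) := by
  have hval : ∀ t : ZMod 2, (if t ≠ 0 then (1 : ZMod 2) else 0) = t := by decide
  unfold hWt
  rw [← Z4Aux.sum_powersetCard_negone (univ.filter fun i => b i ≠ 0) j]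
  apply Finset.sum_nbij' (i := fun x => univ.filter fun i => x i ≠ 0)
    (j := fun X => fun i => if i ∈ X then (1 : ZMod 2) else 0)
  · intro x hx
    rw [Finset.mem_filter] at hx
    rw [Finset.mem_powersetCard_univ]
    exact hx.2
  · intro X hX
    rw [Finset.mem_powersetCard_univ] at hX
    rw [Finset.mem_filter]
    refine ⟨Finset.mem_univ _, ?_⟩
    rw [← hX]
    congr 1
    ext i
    by_cases h : i ∈ X <;> simp [h]
  · intro x hx
    funext i
    by_cases h : x i = 0 <;> simp [Finset.mem_filter, h]
    revert h
    revert i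
    show ∀ i, x i ≠ 0 → 1 = x i
    intro i
    have : ∀ t : ZMod 2, t ≠ 0 → (1:ZMod 2) = t := by decide
    exact this (x i)
  · intro X hX
    ext i
    simp only [Finset.mem_filter, Finset.mem_univ, true_and, ne_eq]
    by_cases h : i ∈ X <;> simp [h]
  · intro x hx
    exact Z4Aux.chi_eq_pow x b

lemma Z4Aux.inn_add_right (x b b' : ι → ZMod 2) : inn x (b + b') = inn x b + inn x b' := by
  unfold inn
  rw [← Finset.sum_add_distrib]
  apply Finset.sum_congr rfl
  intro i _
  simp [Pi.add_apply, mul_add]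

lemma Z4Aux.sum_chi_orth (Bf : Finset (ι → ZMod 2))
    (hadd : ∀ b ∈ Bf, ∀ b' ∈ Bf, b + b' ∈ Bf) (x : ι → ZMod 2) :
    ∑ b ∈ Bf, chi x b = if (∀ b ∈ Bf, inn x b = 0) then (Bf.card : ℤ) else 0 := by
  classical
  by_cases h : ∀ b ∈ Bf, inn x b = 0
  · rw [if_pos h]
    rw [Finset.sum_congr rfl (fun b hb => by unfold chi; rw [if_pos (h b hb)])]
    simp
  · rw [if_neg h]
    push_neg at h
    obtain ⟨b₀, hb₀, hinn⟩ := h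
    have hb1 : inn x b₀ = 1 := by
      have : ∀ t : ZMod 2, t ≠ 0 → t = 1 := by decide
      exact this _ hinn
    apply Finset.sum_involution (g := fun b _ => b + b₀)
    · intro b hb
      unfold chi
      rw [Z4Aux.inn_add_right, hb1]
      rcases (show ∀ t : ZMod 2, t = 0 ∨ t = 1 by decide) (inn x b) with h0 | h1
      · rw [h0, if_pos rfl, if_neg (by decide)]
        ring
      · rw [h1, if_neg (by decide), if_pos (by decide)]
        ring
    · intro b hb _
      intro heq
      have hb00 : b₀ = 0 := by
        rw [add_comm] at heq
        have := add_right_cancel (a := b₀) (b := b) (c := 0) (by rw [zero_add]; exact heq)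
        exact this
      rw [hb00] at hinn
      unfold inn at hinn
      simp at hinn
    · intro b hb
      exact hadd b hb b₀ hb₀
    · intro b hb
      have hzero : b₀ + b₀ = 0 := by
        funext i
        have : ∀ t : ZMod 2, t + t = 0 := by decide
        exact this (b₀ i)
      rw [add_assoc, hzero, add_zero]

lemma Z4Aux.star_identity (Bf : Finset (ι → ZMod 2))
    (hadd : ∀ b ∈ Bf, ∀ b' ∈ Bf, b + b' ∈ Bf) (j : ℕ) :
    ∑ b ∈ Bf, Kint (Fintype.card ι) j (hWt b)
      = (Bf.card : ℤ) * ((univ : Finset (ι → ZMod 2)).filter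
          (fun x => hWt x = j ∧ ∀ b ∈ Bf, inn x b = 0)).card := by
  classical
  have h1 : ∑ b ∈ Bf, Kint (Fintype.card ι) j (hWt b)
      = ∑ b ∈ Bf, ∑ x ∈ (univ : Finset (ι → ZMod 2)).filter (fun x => hWt x = j), chi x b :=
    Finset.sum_congr rfl fun b _ => (Z4Aux.sum_chi_eq_kint b j).symm
  rw [h1, Finset.sum_comm]
  have h2 : ∀ x ∈ (univ : Finset (ι → ZMod 2)).filter (fun x => hWt x = j),
      ∑ b ∈ Bf, chi x b = if (∀ b ∈ Bf, inn x b = 0) then (Bf.card : ℤ) else 0 :=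
    fun x _ => Z4Aux.sum_chi_orth Bf hadd x
  rw [Finset.sum_congr rfl h2, Finset.sum_ite, Finset.sum_const, Finset.sum_const_zero,
    Finset.filter_filter, add_zero, nsmul_eq_mul, mul_comm]

lemma Z4Aux.hWt_eq_zero (x : ι → ZMod 2) : hWt x = 0 ↔ x = 0 := by
  unfold hWt
  rw [Finset.card_eq_zero, Finset.filter_eq_empty_iff]
  constructor
  · intro h
    funext i
    have := h (Finset.mem_univ i)
    simpa using this
  · intro h i _
    rw [h]
    simp

/-- The key counting argument: there is no weight-5 vector orthogonal to a
doubly even binary code of length 24 whose nonzero weights are at least 8,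
provided no nonzero vector of weight at most 4 is orthogonal to the code. -/
lemma Z4Aux.no_wt5 (Bf : Finset (Fin 24 → ZMod 2))
    (hadd : ∀ b ∈ Bf, ∀ b' ∈ Bf, b + b' ∈ Bf) (h0 : (0 : Fin 24 → ZMod 2) ∈ Bf)
    (hwt : ∀ b ∈ Bf, hWt b = 0 ∨ (4 ∣ hWt b ∧ 8 ≤ hWt b))
    (hsmall : ∀ x : Fin 24 → ZMod 2, (∀ b ∈ Bf, inn x b = 0) → hWt x = 0 ∨ 5 ≤ hWt x)
    (u : Fin 24 → ZMod 2) (hu5 : hWt u = 5) (huperp : ∀ b ∈ Bf, inn u b = 0) : False := by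
  classical
  set S : Finset ℕ := {0, 8, 12, 16, 20, 24} with hSdef
  have hwle : ∀ b : Fin 24 → ZMod 2, hWt b ≤ 24 := by
    intro b
    unfold hWt
    calc (Finset.univ.filter fun i => b i ≠ 0).card ≤ (univ : Finset (Fin 24)).card :=
      Finset.card_le_card (Finset.filter_subset _ _)
    _ = 24 := by simp
  have hS : ∀ b ∈ Bf, hWt b ∈ S := by
    intro b hb
    have h1 := hwt b hb
    have h2 := hwle b
    simp only [hSdef, Finset.mem_insert, Finset.mem_singleton]
    omega
  set Bw : ℕ → ℕ := fun w => (Bf.filter fun b => hWt b = w).card with hBw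
  have hbucket : ∀ j : ℕ, ∑ b ∈ Bf, Kint 24 j (hWt b) = ∑ w ∈ S, (Bw w : ℤ) * Kint 24 j w := by
    intro j
    rw [← Finset.sum_fiberwise_of_maps_to hS (fun b => Kint 24 j (hWt b))]
    apply Finset.sum_congr rfl
    intro w hw
    have hcong : ∀ b ∈ Bf.filter (fun b => hWt b = w), Kint 24 j (hWt b) = Kint 24 j w := by
      intro b hb
      rw [Finset.mem_filter] at hb
      rw [hb.2]
    rw [Finset.sum_congr rfl hcong, Finset.sum_const, nsmul_eq_mul]
  have hB0 : Bw 0 = 1 := by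
    have hfe : Bf.filter (fun b => hWt b = 0) = {0} := by
      ext b
      simp only [Finset.mem_filter, Finset.mem_singleton]
      rw [Z4Aux.hWt_eq_zero]
      constructor
      · exact fun h => h.2
      · intro h; exact ⟨h ▸ h0, h⟩
    rw [hBw]
    simp only [hfe, Finset.card_singleton]
  set N : ℕ → ℕ := fun j => ((univ : Finset (Fin 24 → ZMod 2)).filter
      (fun x => hWt x = j ∧ ∀ b ∈ Bf, inn x b = 0)).card with hN
  have hstar : ∀ j : ℕ, ∑ w ∈ S, (Bw w : ℤ) * Kint 24 j w = (Bf.card : ℤ) * N j := by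
    intro j
    rw [← hbucket j]
    have := Z4Aux.star_identity Bf hadd j
    simpa using this
  have hNzero : ∀ j : ℕ, 1 ≤ j → j ≤ 4 → N j = 0 := by
    intro j hj1 hj4
    rw [hN]
    rw [Finset.card_eq_zero, Finset.filter_eq_empty_iff]
    rintro x _ ⟨hxw, hxperp⟩
    have := hsmall x hxperp
    omega
  have hN5 : 1 ≤ N 5 := by
    rw [hN]
    rw [Nat.one_le_iff_ne_zero, ← Nat.pos_iff_ne_zero, Finset.card_pos]
    exact ⟨u, Finset.mem_filter.mpr ⟨Finset.mem_univ u, hu5, huperp⟩⟩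
  have hM : 1 ≤ Bf.card := by
    rw [Nat.one_le_iff_ne_zero, ← Nat.pos_iff_ne_zero, Finset.card_pos]
    exact ⟨0, h0⟩
  have hexp : ∀ j : ℕ, ∑ w ∈ S, (Bw w : ℤ) * Kint 24 j w
      = (Bw 0 : ℤ) * Kint 24 j 0 + (Bw 8 : ℤ) * Kint 24 j 8 + (Bw 12 : ℤ) * Kint 24 j 12
        + (Bw 16 : ℤ) * Kint 24 j 16 + (Bw 20 : ℤ) * Kint 24 j 20
        + (Bw 24 : ℤ) * Kint 24 j 24 := by
    intro j
    rw [hSdef]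
    rw [Finset.sum_insert (by decide), Finset.sum_insert (by decide),
      Finset.sum_insert (by decide), Finset.sum_insert (by decide),
      Finset.sum_insert (by decide), Finset.sum_singleton]
    ring
  have e1 := hstar 1
  have e2 := hstar 2
  have e3 := hstar 3
  have e4 := hstar 4
  have e5 := hstar 5
  rw [hexp, hB0] at e1 e2 e3 e4 e5
  rw [hNzero 1 (by norm_num) (by norm_num)] at e1
  rw [hNzero 2 (by norm_num) (by norm_num)] at e2
  rw [hNzero 3 (by norm_num) (by norm_num)] at e3
  rw [hNzero 4 (by norm_num) (by norm_num)] at e4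
  simp only [Nat.cast_zero, mul_zero] at e1 e2 e3 e4
  have h5pos : (1:ℤ) ≤ (Bf.card : ℤ) * (N 5 : ℤ) := by
    have : (1:ℕ) ≤ Bf.card * N 5 :=
      Nat.one_le_iff_ne_zero.mpr (Nat.mul_ne_zero (by omega) (by omega))
    exact_mod_cast this
  rw [show ((Bf.card : ℤ) * (N 5 : ℤ)) = ((Bf.card * N 5 : ℕ) : ℤ) by push_cast; ring]
    at e5 h5pos
  rw [show Kint 24 1 0 = 24 by decide, show Kint 24 1 8 = 8 by decide,
    show Kint 24 1 12 = 0 by decide, show Kint 24 1 16 = -8 by decide,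
    show Kint 24 1 20 = -16 by decide, show Kint 24 1 24 = -24 by decide] at e1
  rw [show Kint 24 2 0 = 276 by decide, show Kint 24 2 8 = 20 by decide,
    show Kint 24 2 12 = -12 by decide, show Kint 24 2 16 = 20 by decide,
    show Kint 24 2 20 = 116 by decide, show Kint 24 2 24 = 276 by decide] at e2
  rw [show Kint 24 3 0 = 2024 by decide, show Kint 24 3 8 = -8 by decide,
    show Kint 24 3 12 = 0 by decide, show Kint 24 3 16 = 8 by decide,
    show Kint 24 3 20 = -496 by decide, show Kint 24 3 24 = -2024 by decide] at e3
  rw [show Kint 24 4 0 = 10626 by decide, show Kint 24 4 8 = -126 by decide,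
    show Kint 24 4 12 = 66 by decide, show Kint 24 4 16 = -126 by decide,
    show Kint 24 4 20 = 1346 by decide, show Kint 24 4 24 = 10626 by decide] at e4
  rw [show Kint 24 5 0 = 42504 by decide, show Kint 24 5 8 = -168 by decide,
    show Kint 24 5 12 = 0 by decide, show Kint 24 5 16 = 168 by decide,
    show Kint 24 5 20 = -2224 by decide, show Kint 24 5 24 = -42504 by decide] at e5
  omega

/-! ### Bridging `ZMod 4` codewords with the binary residue code -/

def Z4Aux.z4of : ZMod 2 →+ ZMod 4 where
  toFun t := if t = 0 then 0 else 2
  map_zero' := by decide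
  map_add' := by decide

def Z4Aux.lif (u : ι → ZMod 2) : ι → ZMod 4 := fun i => if u i = 0 then 0 else 2

lemma Z4Aux.hWt_res2 (c : ι → ZMod 4) : hWt (res2 c) = nCount 1 c + nCount 3 c := by
  have h : ∀ a : ZMod 4, (ZMod.castHom (by norm_num : (2:ℕ) ∣ 4) (ZMod 2) a ≠ 0)
      ↔ (a = 1 ∨ a = 3) := by decide
  unfold hWt res2 nCount
  rw [Finset.card_filter]
  simp_rw [h]
  have h2 : ∀ a : ZMod 4, (if a = 1 ∨ a = 3 then (1:ℕ) else 0)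
      = (if a = 1 then 1 else 0) + (if a = 3 then 1 else 0) := by decide
  simp_rw [h2, Finset.sum_add_distrib, ← Finset.card_filter]

lemma Z4Aux.bridge (u : ι → ZMod 2) (y : ι → ZMod 4) :
    ∑ i, lif u i * y i = z4of (inn u (res2 y)) := by
  have h : ∀ (t : ZMod 2) (a : ZMod 4),
      (if t = 0 then (0:ZMod 4) else 2) * a
        = z4of (t * (ZMod.castHom (by norm_num : (2:ℕ) ∣ 4) (ZMod 2) a)) := by decide
  unfold lif inn res2
  rw [map_sum]
  apply Finset.sum_congr rfl
  intro i _
  exact h (u i) (y i)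

lemma Z4Aux.leeWt_lif (u : ι → ZMod 2) : leeWt (lif u) = 2 * hWt u := by
  have h : ∀ t : ZMod 2, leeVal (if t = 0 then (0:ZMod 4) else 2)
      = 2 * (if t ≠ 0 then 1 else 0) := by decide
  unfold leeWt lif hWt
  simp_rw [h, ← Finset.mul_sum, Finset.sum_boole]
  simp [Finset.card_filter]

lemma Z4Aux.lif_eq_zero_iff (u : ι → ZMod 2) : lif u = 0 ↔ u = 0 := by
  constructor
  · intro h
    funext i
    show u i = 0
    by_contra hu
    have := congrFun h i
    rw [show lif u i = if u i = 0 then (0:ZMod 4) else 2 from rfl, if_neg hu] at this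
    rw [Pi.zero_apply] at this
    exact absurd this (by decide)
  · intro h
    rw [h]
    funext i
    simp [lif]

lemma Z4Aux.lif_of_even (x : ι → ZMod 4) (h1 : nCount 1 x + nCount 3 x = 0) :
    lif (fun i => if x i = 2 then (1 : ZMod 2) else 0) = x ∧
    hWt (fun i => if x i = 2 then (1 : ZMod 2) else 0) = nCount 2 x := by
  have hx : ∀ i, x i = 0 ∨ x i = 2 := by
    intro i
    have h1' : nCount 1 x = 0 ∧ nCount 3 x = 0 := by omega
    unfold nCount at h1'
    obtain ⟨ha, hb⟩ := h1'
    rw [Finset.card_eq_zero, Finset.filter_eq_empty_iff] at ha hb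
    have hane := ha (Finset.mem_univ i)
    have hbne := hb (Finset.mem_univ i)
    have hdec : ∀ t : ZMod 4, ¬t = 1 → ¬t = 3 → t = 0 ∨ t = 2 := by decide
    exact hdec _ hane hbne
  constructor
  · funext i
    show (if (if x i = 2 then (1:ZMod 2) else 0) = 0 then (0:ZMod 4) else 2) = x i
    rcases hx i with h | h <;> rw [h] <;> decide
  · unfold hWt nCount
    congr 1
    ext i
    simp only [Finset.mem_filter, Finset.mem_univ, true_and]
    show (if x i = 2 then (1:ZMod 2) else 0) ≠ 0 ↔ x i = 2
    rcases hx i with h | h <;> rw [h] <;> decide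

end Z4Aux

open Z4Note in
/-- a self-dual `ZMod 4`-code of length 24 with minimum Lee weight 10 is
Type I with minimum Euclidean weight 12, and every codeword of Lee weight 10 has
`n₁ + n₃ = 8` and `n₂ = 1`. -/
theorem selfdual_Z4_length24_minLee10
    (C : Submodule (ZMod 4) (Fin 24 → ZMod 4))
    (hsd : SelfDualZ4 C)
    (hlee : minLee (C : Set (Fin 24 → ZMod 4)) = 10) :
    ¬ TypeII (C : Set (Fin 24 → ZMod 4)) ∧
    minEuc (C : Set (Fin 24 → ZMod 4)) = 12 ∧
    ∀ x ∈ C, leeWt x = 10 → nCount 1 x + nCount 3 x = 8 ∧ nCount 2 x = 1 := by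
  classical
  have hOrth : ∀ x ∈ C, ∀ y ∈ C, ∑ i, x i * y i = 0 := by
    intro x hx y hy
    have hx' : x ∈ dualZ4 (C : Set (Fin 24 → ZMod 4)) := by
      rw [← hsd]; exact hx
    exact hx' y hy
  have hk4 : ∀ x ∈ C, 4 ∣ (nCount 1 x + nCount 3 x) := by
    intro x hx
    have h := hOrth x hx x hx
    rw [Z4Aux.selfmul] at h
    exact (ZMod.natCast_eq_zero_iff _ 4).mp h
  -- unpack the minimum Lee weight hypothesis
  have hTne : {d | ∃ x ∈ (C : Set (Fin 24 → ZMod 4)), x ≠ 0 ∧ leeWt x = d}.Nonempty := by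
    by_contra h
    rw [Set.not_nonempty_iff_eq_empty] at h
    unfold minLee at hlee
    rw [h] at hlee
    simp [Nat.sInf_empty] at hlee
  have hlb : ∀ x ∈ C, x ≠ 0 → 10 ≤ leeWt x := by
    intro x hx hne
    have hmem : leeWt x ∈ {d | ∃ x ∈ (C : Set (Fin 24 → ZMod 4)), x ≠ 0 ∧ leeWt x = d} :=
      ⟨x, hx, hne, rfl⟩
    have h := Nat.sInf_le hmem
    unfold minLee at hlee
    omega
  have hex : ∃ x ∈ (C : Set (Fin 24 → ZMod 4)), x ≠ 0 ∧ leeWt x = 10 := by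
    have h := Nat.sInf_mem hTne
    unfold minLee at hlee
    rw [hlee] at h
    exact h
  have hk08 : ∀ x ∈ C, nCount 1 x + nCount 3 x = 0 ∨ 8 ≤ nCount 1 x + nCount 3 x := by
    intro x hx
    by_cases h0 : nCount 1 x + nCount 3 x = 0
    · exact Or.inl h0
    · right
      have h2x : (2 : ZMod 4) • x ∈ C := C.smul_mem _ hx
      have h2ne : (2 : ZMod 4) • x ≠ 0 := fun h =>
        h0 ((Z4Aux.two_smul_eq_zero_iff x).mp h)
      have h10 := hlb _ h2x h2ne
      rw [Z4Aux.leeWt_two_smul] at h10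
      have h4 := hk4 x hx
      omega
  -- the binary residue code
  set Bf : Finset (Fin 24 → ZMod 2) :=
    Finset.univ.filter (· ∈ residue (C : Set (Fin 24 → ZMod 4))) with hBfdef
  have memBf : ∀ b, b ∈ Bf ↔ ∃ c ∈ C, res2 c = b := by
    intro b
    rw [hBfdef, Finset.mem_filter]
    simp only [Finset.mem_univ, true_and]
    rfl
  have hBadd : ∀ b ∈ Bf, ∀ b' ∈ Bf, b + b' ∈ Bf := by
    intro b hb b' hb'
    obtain ⟨c, hc, rfl⟩ := (memBf b).mp hb
    obtain ⟨c', hc', rfl⟩ := (memBf b').mp hb'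
    refine (memBf _).mpr ⟨c + c', C.add_mem hc hc', ?_⟩
    funext i
    exact map_add (ZMod.castHom (by norm_num : (2:ℕ) ∣ 4) (ZMod 2)) (c i) (c' i)
  have hB0 : (0 : Fin 24 → ZMod 2) ∈ Bf := by
    refine (memBf _).mpr ⟨0, C.zero_mem, ?_⟩
    funext i
    simp [res2]
  have hBwt : ∀ b ∈ Bf, hWt b = 0 ∨ (4 ∣ hWt b ∧ 8 ≤ hWt b) := by
    intro b hb
    obtain ⟨c, hc, rfl⟩ := (memBf b).mp hb
    rw [Z4Aux.hWt_res2]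
    rcases hk08 c hc with h | h
    · exact Or.inl h
    · exact Or.inr ⟨hk4 c hc, h⟩
  have hliftC : ∀ u : Fin 24 → ZMod 2, (∀ b ∈ Bf, Z4Aux.inn u b = 0) → Z4Aux.lif u ∈ C := by
    intro u hperp
    have : Z4Aux.lif u ∈ dualZ4 (C : Set (Fin 24 → ZMod 4)) := by
      intro y hy
      rw [Z4Aux.bridge u y]
      have hres : res2 y ∈ Bf := (memBf _).mpr ⟨y, hy, rfl⟩
      rw [hperp _ hres]
      simp
    rw [← SetLike.mem_coe, hsd]
    exact this
  have hsmall : ∀ x : Fin 24 → ZMod 2,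
      (∀ b ∈ Bf, Z4Aux.inn x b = 0) → hWt x = 0 ∨ 5 ≤ hWt x := by
    intro x hperp
    by_contra h
    push_neg at h
    obtain ⟨hne, hlt⟩ := h
    have hxC := hliftC x hperp
    have hxne : Z4Aux.lif x ≠ 0 := by
      intro h0
      exact hne ((Z4Aux.hWt_eq_zero x).mpr ((Z4Aux.lif_eq_zero_iff x).mp h0))
    have h10 := hlb _ hxC hxne
    rw [Z4Aux.leeWt_lif] at h10
    omega
  -- no Lee-weight-10 codeword consists only of 0s and 2s
  have hno5 : ∀ x ∈ C, leeWt x = 10 → ¬(nCount 1 x + nCount 3 x = 0) := by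
    intro x hx h10 hk0
    obtain ⟨hlif, hwtu⟩ := Z4Aux.lif_of_even x hk0
    have hn2 : nCount 2 x = 5 := by
      have h := Z4Aux.leeWt_eq x
      omega
    have huperp : ∀ b ∈ Bf, Z4Aux.inn (fun i => if x i = 2 then (1 : ZMod 2) else 0) b = 0 := by
      intro b hb
      obtain ⟨c, hc, rfl⟩ := (memBf b).mp hb
      have h1 : Z4Aux.z4of (Z4Aux.inn (fun i => if x i = 2 then (1 : ZMod 2) else 0)
          (res2 c)) = 0 := by
        rw [← Z4Aux.bridge, hlif]
        exact hOrth x hx c hc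
      have h2 : ∀ t : ZMod 2, Z4Aux.z4of t = 0 → t = 0 := by decide
      exact h2 _ h1
    exact Z4Aux.no_wt5 Bf hBadd hB0 hBwt hsmall _ (by rw [hwtu, hn2]) huperp
  -- classification of Lee-weight-10 codewords
  have hkey : ∀ x ∈ C, leeWt x = 10 → nCount 1 x + nCount 3 x = 8 ∧ nCount 2 x = 1 := by
    intro x hx h10
    have h1 := Z4Aux.leeWt_eq x
    have h2 := hk4 x hx
    have h3 := hk08 x hx
    have h5 := hno5 x hx h10
    omega
  obtain ⟨x₀, hx₀C, hx₀ne, hx₀lee⟩ := hex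
  have hx₀k := hkey x₀ hx₀C hx₀lee
  have hx₀euc : eucWt x₀ = 12 := by
    have h := Z4Aux.eucWt_eq x₀
    omega
  refine ⟨?_, ?_, hkey⟩
  · intro hT
    have h := hT x₀ hx₀C
    rw [hx₀euc] at h
    omega
  · have hlbE : ∀ y ∈ (C : Set (Fin 24 → ZMod 4)), y ≠ 0 → 12 ≤ eucWt y := by
      intro y hy hne
      have h1 := hlb y hy hne
      have h2 := hk4 y hy
      have h3 := Z4Aux.leeWt_eq y
      have h4 := Z4Aux.eucWt_eq y
      omega
    unfold minEuc
    apply le_antisymm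
    · exact Nat.sInf_le ⟨x₀, hx₀C, hx₀ne, hx₀euc⟩
    · apply le_csInf (⟨12, x₀, hx₀C, hx₀ne, hx₀euc⟩ :
        {d | ∃ x ∈ (C : Set (Fin 24 → ZMod 4)), x ≠ 0 ∧ eucWt x = d}.Nonempty)
      rintro d ⟨y, hy, hne, rfl⟩
      exact hlbE y hy hne
end

section
/- Let k be a positive integer and let C be a binary extremal doubly even self-dual code of length 24k (i.e., C equals its dual, all weights are divisible by 4, and the minimum Hamming weight of C is 4k+4). Then the covering radius of C is at most 4k. -/
open Finset

namespace CovAux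

open Finset Polynomial Z4Note

/-- sign character on `ZMod 2`. -/
def chi (b : ZMod 2) : ℚ := if b = 0 then 1 else -1

lemma chi_zero : chi 0 = 1 := rfl

lemma zmod2_cases (a : ZMod 2) : a = 0 ∨ a = 1 := by revert a; decide

lemma chi_add (a b : ZMod 2) : chi (a + b) = chi a * chi b := by
  rcases zmod2_cases a with ha | ha <;> rcases zmod2_cases b with hb | hb <;>
    subst ha <;> subst hb <;> simp [chi, show (1+1:ZMod 2)=0 by decide]

lemma chi_ne {b : ZMod 2} (h : b ≠ 0) : chi b = -1 := by simp [chi, h]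

lemma zmod2_eq_one {b : ZMod 2} (h : b ≠ 0) : b = 1 := by revert h; revert b; decide

lemma zmod2_neg (b : ZMod 2) : -b = b := by revert b; decide

lemma chi_sum {ι : Type*} (s : Finset ι) (f : ι → ZMod 2) :
    chi (∑ i ∈ s, f i) = ∏ i ∈ s, chi (f i) := by
  classical
  induction s using Finset.cons_induction with
  | empty => simp [chi]
  | cons a s ha ih => rw [Finset.sum_cons, Finset.prod_cons, chi_add, ih]

section HW

variable {ι : Type*} [Fintype ι]

lemma hWt_def (x : ι → ZMod 2) : hWt x = (Finset.univ.filter fun i => x i ≠ 0).card := rfl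

lemma hWt_le (x : ι → ZMod 2) : hWt x ≤ Fintype.card ι := by
  rw [hWt_def]; exact (Finset.card_filter_le _ _).trans (le_of_eq (Finset.card_univ))

lemma hWt_eq_zero_iff (x : ι → ZMod 2) : hWt x = 0 ↔ x = 0 := by
  rw [hWt_def, Finset.card_eq_zero, Finset.filter_eq_empty_iff]
  constructor
  · intro h
    funext i
    have := h (Finset.mem_univ i)
    simpa using this
  · intro h i _
    simp [h]

lemma hWt_zero : hWt (0 : ι → ZMod 2) = 0 := (hWt_eq_zero_iff 0).2 rfl

lemma sum_eq_hWt (y : ι → ZMod 2) : ∑ i, y i = (hWt y : ZMod 2) := by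
  classical
  rw [hWt_def, ← Finset.sum_filter_ne_zero (s := Finset.univ)]
  rw [Finset.sum_congr rfl (fun i hi => zmod2_eq_one (Finset.mem_filter.1 hi).2)]
  rw [Finset.sum_const, nsmul_eq_mul, mul_one]

lemma char_sum_zero (D : Submodule (ZMod 2) (ι → ZMod 2)) [Fintype D]
    (y : ι → ZMod 2) (hy : y ∉ dual2 (D : Set (ι → ZMod 2))) :
    ∑ u : D, chi (∑ i, (u : ι → ZMod 2) i * y i) = 0 := by
  simp only [dual2, Set.mem_setOf_eq, not_forall] at hy
  obtain ⟨c, hc, hcy⟩ := hy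
  have hcy1 : (∑ i, y i * c i) = 1 := zmod2_eq_one hcy
  set c0 : D := ⟨c, hc⟩
  set S := ∑ u : D, chi (∑ i, (u : ι → ZMod 2) i * y i) with hS
  have hre : ∑ u : D, chi (∑ i, ((u + c0 : D) : ι → ZMod 2) i * y i) = S := by
    exact Fintype.sum_equiv (Equiv.addRight c0)
      (fun u => chi (∑ i, ((u + c0 : D) : ι → ZMod 2) i * y i))
      (fun u => chi (∑ i, (u : ι → ZMod 2) i * y i)) (fun u => rfl)
  have hneg : ∀ u : D, chi (∑ i, ((u + c0 : D) : ι → ZMod 2) i * y i)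
      = - chi (∑ i, (u : ι → ZMod 2) i * y i) := by
    intro u
    have h1 : (∑ i, ((u + c0 : D) : ι → ZMod 2) i * y i)
        = (∑ i, (u : ι → ZMod 2) i * y i) + ∑ i, y i * c i := by
      rw [← Finset.sum_add_distrib]
      refine Finset.sum_congr rfl fun i _ => ?_
      have : ((u + c0 : D) : ι → ZMod 2) i = (u : ι → ZMod 2) i + c i := rfl
      rw [this]; ring
    rw [h1, hcy1, chi_add]
    simp [chi]
  rw [Finset.sum_congr rfl (fun u _ => hneg u), Finset.sum_neg_distrib] at hre
  change -S = S at hre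
  linarith

end HW

/-! ### Binomial and Krawtchouk polynomials -/

noncomputable def bp (j : ℕ) : ℚ[X] :=
  Polynomial.C ((j.factorial : ℚ)⁻¹) * ∏ t ∈ Finset.range j, (X - Polynomial.C (t : ℚ))

lemma bp_prod_monic (j : ℕ) : (∏ t ∈ Finset.range j, ((X:ℚ[X]) - Polynomial.C (t:ℚ))).Monic :=
  monic_prod_of_monic _ _ fun t _ => monic_X_sub_C _

lemma bp_prod_natDegree (j : ℕ) :
    (∏ t ∈ Finset.range j, ((X:ℚ[X]) - Polynomial.C (t:ℚ))).natDegree = j := by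
  rw [natDegree_prod]
  · simp only [natDegree_X_sub_C]
    simp
  · intro t _; exact X_sub_C_ne_zero _

lemma factorial_inv_ne (j : ℕ) : ((j.factorial : ℚ))⁻¹ ≠ 0 :=
  inv_ne_zero (Nat.cast_ne_zero.2 j.factorial_ne_zero)

lemma bp_ne_zero (j : ℕ) : bp j ≠ 0 :=
  mul_ne_zero (Polynomial.C_ne_zero.2 (factorial_inv_ne j)) (bp_prod_monic j).ne_zero

lemma bp_natDegree (j : ℕ) : (bp j).natDegree = j := by
  rw [bp, natDegree_mul (Polynomial.C_ne_zero.2 (factorial_inv_ne j)) (bp_prod_monic j).ne_zero,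
    natDegree_C, bp_prod_natDegree, zero_add]

lemma bp_leadingCoeff (j : ℕ) : (bp j).leadingCoeff = (j.factorial : ℚ)⁻¹ := by
  rw [bp, leadingCoeff_mul, leadingCoeff_C, (bp_prod_monic j).leadingCoeff, mul_one]

lemma prod_range_eval (j w : ℕ) :
    (∏ t ∈ Finset.range j, ((w:ℚ) - (t:ℚ))) = (w.descFactorial j : ℚ) := by
  induction j with
  | zero => simp
  | succ j ih =>
    rw [Finset.prod_range_succ, ih, Nat.descFactorial_succ]
    rcases lt_trichotomy w j with h | h | h
    · rw [Nat.descFactorial_eq_zero_iff_lt.2 h]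
      simp
    · subst h; simp
    · rw [Nat.cast_mul, Nat.cast_sub h.le]
      ring

lemma bp_eval (j w : ℕ) : (bp j).eval (w:ℚ) = (w.choose j : ℚ) := by
  rw [bp, eval_mul, eval_C, eval_prod]
  simp only [eval_sub, eval_X, eval_C]
  rw [prod_range_eval, Nat.descFactorial_eq_factorial_mul_choose, Nat.cast_mul,
    ← mul_assoc, inv_mul_cancel₀ (Nat.cast_ne_zero.2 j.factorial_ne_zero), one_mul]

noncomputable def Kp (n i : ℕ) : ℚ[X] :=
  ∑ j ∈ Finset.range (i+1),
    Polynomial.C ((-1:ℚ)^j) *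
      ((bp (i-j)).comp (Polynomial.C (n:ℚ) - X) * bp j)

lemma lin_eq (n : ℕ) : Polynomial.C ((n:ℚ)) - X = -(X - Polynomial.C ((n:ℚ))) := by ring

lemma lin_natDegree (n : ℕ) : (Polynomial.C ((n:ℚ)) - X).natDegree = 1 := by
  rw [lin_eq, natDegree_neg, natDegree_X_sub_C]

lemma lin_leadingCoeff (n : ℕ) : (Polynomial.C ((n:ℚ)) - X).leadingCoeff = -1 := by
  rw [lin_eq, leadingCoeff_neg, (monic_X_sub_C _).leadingCoeff]

lemma comp_natDegree (n m : ℕ) :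
    ((bp m).comp (Polynomial.C (n:ℚ) - X)).natDegree = m := by
  rw [natDegree_comp, bp_natDegree, lin_natDegree, mul_one]

lemma comp_leadingCoeff (n m : ℕ) :
    ((bp m).comp (Polynomial.C (n:ℚ) - X)).leadingCoeff = (m.factorial:ℚ)⁻¹ * (-1)^m := by
  rw [leadingCoeff_comp (by rw [lin_natDegree]; exact one_ne_zero), bp_leadingCoeff,
    lin_leadingCoeff, bp_natDegree]

lemma comp_ne_zero (n m : ℕ) : (bp m).comp (Polynomial.C (n:ℚ) - X) ≠ 0 := by
  rw [← leadingCoeff_ne_zero, comp_leadingCoeff]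
  exact mul_ne_zero (factorial_inv_ne m) (pow_ne_zero _ (by norm_num))

lemma Kterm_natDegree (n i j : ℕ) (hj : j ≤ i) :
    (Polynomial.C ((-1:ℚ)^j) *
      ((bp (i-j)).comp (Polynomial.C (n:ℚ) - X) * bp j)).natDegree = i := by
  rw [natDegree_mul (Polynomial.C_ne_zero.2 (pow_ne_zero _ (by norm_num)))
      (mul_ne_zero (comp_ne_zero n (i-j)) (bp_ne_zero j)),
    natDegree_C, natDegree_mul (comp_ne_zero n (i-j)) (bp_ne_zero j),
    comp_natDegree, bp_natDegree]
  omega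

lemma Kterm_coeff (n i j : ℕ) (hj : j ≤ i) :
    (Polynomial.C ((-1:ℚ)^j) *
      ((bp (i-j)).comp (Polynomial.C (n:ℚ) - X) * bp j)).coeff i
    = (-1:ℚ)^i * ((((i-j).factorial:ℚ))⁻¹ * ((j.factorial:ℚ))⁻¹) := by
  have key : ∀ p : ℚ[X], p.natDegree = i → p.coeff i = p.leadingCoeff := fun p hp => by
    rw [← hp, coeff_natDegree]
  rw [key _ (Kterm_natDegree n i j hj), leadingCoeff_mul, leadingCoeff_mul, leadingCoeff_C,
    comp_leadingCoeff, bp_leadingCoeff]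
  have hpow : (-1:ℚ)^j * (-1:ℚ)^(i-j) = (-1:ℚ)^i := by
    rw [← pow_add]
    congr 1
    omega
  linear_combination ((((i-j).factorial:ℚ))⁻¹ * ((j.factorial:ℚ))⁻¹) * hpow

lemma Kp_coeff_ne_zero (n i : ℕ) : (Kp n i).coeff i ≠ 0 := by
  rw [Kp, finset_sum_coeff]
  rw [Finset.sum_congr rfl (fun j hj =>
    Kterm_coeff n i j (by have := Finset.mem_range.1 hj; omega))]
  rw [← Finset.mul_sum]
  apply mul_ne_zero (pow_ne_zero _ (by norm_num))
  apply ne_of_gt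
  apply Finset.sum_pos
  · intro j _
    positivity
  · exact Finset.nonempty_range_add_one

lemma Kp_natDegree_le (n i : ℕ) : (Kp n i).natDegree ≤ i := by
  apply Polynomial.natDegree_sum_le_of_forall_le
  intro j hj
  exact le_of_eq (Kterm_natDegree n i j (by have := Finset.mem_range.1 hj; omega))

lemma Kp_eval (n i w : ℕ) (hw : w ≤ n) :
    (Kp n i).eval ((w:ℚ)) =
      ∑ j ∈ Finset.range (i+1), (-1:ℚ)^j * ((n-w).choose (i-j) : ℚ) * (w.choose j : ℚ) := by
  rw [Kp, eval_finset_sum]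
  refine Finset.sum_congr rfl fun j hj => ?_
  rw [eval_mul, eval_mul, eval_C, eval_comp, eval_sub, eval_C, eval_X,
    show (n:ℚ) - (w:ℚ) = ((n - w : ℕ) : ℚ) by rw [Nat.cast_sub hw],
    bp_eval, bp_eval, mul_assoc]

lemma span_Kp (n : ℕ) : ∀ d : ℕ, ∀ p : ℚ[X], p.natDegree ≤ d →
    ∃ α : ℕ → ℚ, p = ∑ i ∈ Finset.range (d+1), Polynomial.C (α i) * Kp n i := by
  intro d
  induction d with
  | zero =>
    intro p hp
    refine ⟨fun _ => p.coeff 0 / (Kp n 0).coeff 0, ?_⟩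
    rw [Finset.range_one, Finset.sum_singleton]
    beta_reduce
    calc p = Polynomial.C (p.coeff 0) := eq_C_of_natDegree_le_zero hp
      _ = Polynomial.C (p.coeff 0 / (Kp n 0).coeff 0) * Polynomial.C ((Kp n 0).coeff 0) := by
          rw [← Polynomial.C_mul, div_mul_cancel₀ _ (Kp_coeff_ne_zero n 0)]
      _ = Polynomial.C (p.coeff 0 / (Kp n 0).coeff 0) * Kp n 0 := by
          rw [← eq_C_of_natDegree_le_zero (Kp_natDegree_le n 0)]
  | succ d ih =>
    intro p hp
    set c : ℚ := p.coeff (d+1) / (Kp n (d+1)).coeff (d+1) with hc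
    have hdeg : (p - Polynomial.C c * Kp n (d+1)).natDegree ≤ d := by
      rw [natDegree_le_iff_coeff_eq_zero]
      intro N hN
      rw [Polynomial.coeff_sub, Polynomial.coeff_C_mul]
      rcases eq_or_lt_of_le (Nat.succ_le_of_lt hN) with h | h
      · rw [← h, hc, div_mul_cancel₀ _ (Kp_coeff_ne_zero n (d+1)), sub_self]
      · rw [Polynomial.coeff_eq_zero_of_natDegree_lt (lt_of_le_of_lt hp h),
          Polynomial.coeff_eq_zero_of_natDegree_lt (lt_of_le_of_lt (Kp_natDegree_le n (d+1)) h)]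
        simp
    obtain ⟨α, hα⟩ := ih _ hdeg
    refine ⟨fun i => if i = d+1 then c else α i, ?_⟩
    rw [Finset.sum_range_succ]
    beta_reduce
    rw [if_pos rfl]
    rw [Finset.sum_congr rfl (fun i hi => by
      rw [if_neg (by have := Finset.mem_range.1 hi; omega)])]
    rw [← hα]
    ring

lemma coeff_one_sub_X_pow (w b : ℕ) :
    ((1 - (X:ℚ[X]))^w).coeff b = (-1:ℚ)^b * (w.choose b : ℚ) := by
  have h1 : (1 - (X:ℚ[X])) = -(X + Polynomial.C (-1:ℚ)) := by
    rw [Polynomial.C_neg, Polynomial.C_1]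
    ring
  rw [h1, neg_pow, show ((-1 : ℚ[X]))^w = Polynomial.C ((-1:ℚ)^w) by
      rw [Polynomial.C_pow, Polynomial.C_neg, Polynomial.C_1],
    Polynomial.coeff_C_mul, Polynomial.coeff_X_add_C_pow]
  by_cases hbw : b ≤ w
  · have hs : (-1:ℚ)^w * (-1:ℚ)^(w-b) = (-1:ℚ)^b := by
      rw [← pow_add, show w + (w - b) = b + 2*(w-b) by omega, pow_add, pow_mul]
      simp
    linear_combination (w.choose b : ℚ) * hs
  · rw [Nat.choose_eq_zero_of_lt (by omega)]
    simp

section GenFun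

variable {ι : Type*} [Fintype ι] [DecidableEq ι]

lemma gen_fun (u : ι → ZMod 2) :
    ∑ z : ι → ZMod 2, Polynomial.C (chi (∑ i, z i * u i)) * (X:ℚ[X]) ^ hWt z
      = (1 + X) ^ (Fintype.card ι - hWt u) * (1 - X) ^ hWt u := by
  have step1 : ∀ z : ι → ZMod 2,
      Polynomial.C (chi (∑ i, z i * u i)) * (X:ℚ[X]) ^ hWt z
        = ∏ i, (Polynomial.C (chi (z i * u i)) * X ^ (if z i ≠ 0 then 1 else 0)) := by
    intro z
    rw [Finset.prod_mul_distrib, ← map_prod, ← chi_sum, Finset.prod_pow_eq_pow_sum]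
    congr 2
    rw [hWt_def, Finset.card_filter]
  rw [Finset.sum_congr rfl fun z _ => step1 z]
  rw [← Fintype.piFinset_univ,
    ← Finset.prod_univ_sum (fun _ => (Finset.univ : Finset (ZMod 2)))
      (fun i b => Polynomial.C (chi (b * u i)) * (X:ℚ[X]) ^ (if b ≠ 0 then 1 else 0))]
  have hsum2 : ∀ i : ι, ∑ b : ZMod 2, Polynomial.C (chi (b * u i)) * (X:ℚ[X]) ^ (if b ≠ 0 then 1 else 0)
      = 1 + Polynomial.C (chi (u i)) * X := by
    intro i
    rw [show (Finset.univ : Finset (ZMod 2)) = {0, 1} by decide,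
      Finset.sum_insert (by decide), Finset.sum_singleton]
    norm_num [chi_zero]
  rw [Finset.prod_congr rfl fun i _ => hsum2 i]
  rw [← Finset.prod_filter_mul_prod_filter_not Finset.univ (fun i => u i ≠ 0)]
  have hA : ∀ i ∈ Finset.univ.filter (fun i => u i ≠ 0),
      1 + Polynomial.C (chi (u i)) * X = 1 - (X:ℚ[X]) := by
    intro i hi
    rw [chi_ne (Finset.mem_filter.1 hi).2, Polynomial.C_neg, Polynomial.C_1]
    ring
  have hB : ∀ i ∈ Finset.univ.filter (fun i => ¬ u i ≠ 0),
      1 + Polynomial.C (chi (u i)) * X = 1 + (X:ℚ[X]) := by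
    intro i hi
    have h0 : u i = 0 := not_not.1 (Finset.mem_filter.1 hi).2
    rw [h0, chi_zero, Polynomial.C_1, one_mul]
  rw [Finset.prod_congr rfl hA, Finset.prod_congr rfl hB, Finset.prod_const, Finset.prod_const]
  have hcards : (Finset.univ.filter (fun i => ¬ u i ≠ 0)).card = Fintype.card ι - hWt u := by
    have := Finset.card_filter_add_card_filter_not (s := (Finset.univ : Finset ι))
      (p := fun i => u i ≠ 0)
    rw [Finset.card_univ] at this
    rw [← hWt_def u] at this
    omega
  rw [hcards, hWt_def]
  rw [mul_comm]

lemma key_count (u : ι → ZMod 2) (i : ℕ) :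
    ∑ z ∈ Finset.univ.filter (fun z : ι → ZMod 2 => hWt z = i), chi (∑ t, z t * u t)
      = (Kp (Fintype.card ι) i).eval ((hWt u : ℚ)) := by
  have h := congrArg (fun p : ℚ[X] => p.coeff i) (gen_fun u)
  simp only [finset_sum_coeff] at h
  have hL : ∀ z : ι → ZMod 2,
      (Polynomial.C (chi (∑ t, z t * u t)) * (X:ℚ[X]) ^ hWt z).coeff i
        = if hWt z = i then chi (∑ t, z t * u t) else 0 := by
    intro z
    rw [Polynomial.coeff_C_mul, Polynomial.coeff_X_pow]
    by_cases hz : hWt z = i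
    · simp [hz]
    · rw [if_neg (fun hh => hz hh.symm), if_neg hz, mul_zero]
  rw [Finset.sum_congr rfl (fun z _ => hL z), ← Finset.sum_filter] at h
  rw [h, Polynomial.coeff_mul, Kp_eval _ _ _ (hWt_le u)]
  rw [Finset.Nat.sum_antidiagonal_eq_sum_range_succ_mk]
  rw [← Finset.sum_range_reflect]
  refine Finset.sum_congr rfl fun j hj => ?_
  have hji : j ≤ i := by have := Finset.mem_range.1 hj; omega
  rw [show i + 1 - 1 - j = i - j by omega]
  rw [Polynomial.coeff_one_add_X_pow, coeff_one_sub_X_pow]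
  rw [show i - (i - j) = j by omega]
  ring

end GenFun

open Z4Note in
lemma covRad_main (k : ℕ) (hk : 0 < k)
    (C : Submodule (ZMod 2) (Fin (24 * k) → ZMod 2))
    (hsd : SelfDual2 C)
    (hde : DoublyEven (C : Set (Fin (24 * k) → ZMod 2)))
    (hmin : minHam (C : Set (Fin (24 * k) → ZMod 2)) = 4 * k + 4) :
    covRad (C : Set (Fin (24 * k) → ZMod 2)) ≤ 4 * k := by
  classical
  haveI : Fintype ↥C := Fintype.ofFinite _
  have hcard : Fintype.card (Fin (24 * k)) = 24 * k := Fintype.card_fin _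
  have hsd' : (C : Set (Fin (24 * k) → ZMod 2)) = dual2 (C : Set (Fin (24 * k) → ZMod 2)) := hsd
  -- lower bound on nonzero weights
  have hlow : ∀ c : Fin (24 * k) → ZMod 2, c ∈ C → c ≠ 0 → 4 * k + 4 ≤ hWt c := by
    intro c hc hc0
    have hmem : hWt c ∈ {d | ∃ x ∈ (C : Set (Fin (24 * k) → ZMod 2)), x ≠ 0 ∧ hWt x = d} :=
      ⟨c, hc, hc0, rfl⟩
    have h1 : minHam (C : Set (Fin (24 * k) → ZMod 2)) ≤ hWt c := Nat.sInf_le hmem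
    omega
  -- the all-ones vector is in C
  set oneV : Fin (24 * k) → ZMod 2 := fun _ => 1 with honeV
  have hone : oneV ∈ C := by
    have hmem : oneV ∈ dual2 (C : Set (Fin (24 * k) → ZMod 2)) := by
      intro y hy
      have h4 : 4 ∣ hWt y := hde y hy
      have h2 : (∑ i, oneV i * y i) = (hWt y : ZMod 2) := by
        simpa [honeV] using sum_eq_hWt y
      rw [h2]
      obtain ⟨m, hm⟩ := h4
      rw [hm, Nat.cast_mul, show ((4:ℕ) : ZMod 2) = 0 by decide, zero_mul]
    have : oneV ∈ (C : Set (Fin (24 * k) → ZMod 2)) := by rw [hsd']; exact hmem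
    exact this
  have honewt : hWt oneV = 24 * k := by
    rw [hWt_def]
    rw [Finset.filter_true_of_mem (fun i _ => by simp [honeV])]
    rw [Finset.card_univ, hcard]
  have hcompl : ∀ c : Fin (24 * k) → ZMod 2, hWt (oneV + c) = 24 * k - hWt c := by
    intro c
    have hpred : ∀ b : ZMod 2, (1 + b ≠ 0) ↔ ¬ (b ≠ 0) := by decide
    rw [hWt_def, hWt_def]
    rw [show (Finset.univ.filter fun i => (oneV + c) i ≠ 0)
        = Finset.univ.filter (fun i => ¬ (c i ≠ 0)) from
      Finset.filter_congr fun i _ => by simpa [honeV] using hpred (c i)]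
    have := Finset.card_filter_add_card_filter_not
      (s := (Finset.univ : Finset (Fin (24 * k)))) (p := fun i => c i ≠ 0)
    rw [Finset.card_univ, hcard] at this
    omega
  -- the set of nonzero weights
  set W : Finset ℕ := ((Finset.univ : Finset ↥C).filter fun c : ↥C => (c : Fin (24 * k) → ZMod 2) ≠ 0).image
      (fun c : ↥C => hWt (c : Fin (24 * k) → ZMod 2)) with hW
  have hWmem : ∀ c : ↥C, (c : Fin (24 * k) → ZMod 2) ≠ 0 → hWt (c : Fin (24 * k) → ZMod 2) ∈ W := by
    intro c h
    exact Finset.mem_image_of_mem _ (Finset.mem_filter.2 ⟨Finset.mem_univ _, h⟩)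
  have hWpos : ∀ w ∈ W, 0 < w := by
    intro w hw
    obtain ⟨c, hc, rfl⟩ := Finset.mem_image.1 hw
    have := hlow _ c.2 (Finset.mem_filter.1 hc).2
    omega
  have hWcard : W.card ≤ 4 * k := by
    have hsub : W ⊆ ((Finset.Icc (k+1) (5*k-1)).image fun t => 4*t) ∪ {24*k} := by
      intro w hw
      obtain ⟨c, hc, rfl⟩ := Finset.mem_image.1 hw
      have hc0 : (c : Fin (24 * k) → ZMod 2) ≠ 0 := (Finset.mem_filter.1 hc).2
      have h4 : 4 ∣ hWt (c : Fin (24 * k) → ZMod 2) := hde _ c.2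
      have hl : 4*k+4 ≤ hWt (c : Fin (24 * k) → ZMod 2) := hlow _ c.2 hc0
      by_cases hcone : (c : Fin (24 * k) → ZMod 2) = oneV
      · rw [hcone, honewt]
        exact Finset.mem_union_right _ (Finset.mem_singleton_self _)
      · have hc1 : oneV + (c : Fin (24 * k) → ZMod 2) ∈ C := C.add_mem hone c.2
        have hne : oneV + (c : Fin (24 * k) → ZMod 2) ≠ 0 := by
          intro h0
          apply hcone
          funext i
          have h1 := congrFun h0 i
          have hb : ∀ b : ZMod 2, 1 + b = 0 → b = 1 := by decide
          simpa [honeV] using hb _ (by simpa [honeV] using h1)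
        have hl2 := hlow _ hc1 hne
        rw [hcompl] at hl2
        have hle := hWt_le (c : Fin (24 * k) → ZMod 2)
        rw [hcard] at hle
        obtain ⟨t, ht⟩ := h4
        refine Finset.mem_union_left _ (Finset.mem_image.2 ⟨t, Finset.mem_Icc.2 ⟨?_, ?_⟩, ht.symm⟩)
        · omega
        · omega
    calc W.card ≤ (((Finset.Icc (k+1) (5*k-1)).image fun t => 4*t) ∪ {24*k}).card :=
          Finset.card_le_card hsub
      _ ≤ ((Finset.Icc (k+1) (5*k-1)).image fun t => 4*t).card + ({24*k} : Finset ℕ).card :=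
          Finset.card_union_le _ _
      _ ≤ (Finset.Icc (k+1) (5*k-1)).card + 1 :=
          add_le_add (Finset.card_image_le) (le_of_eq (Finset.card_singleton _))
      _ ≤ 4 * k := by rw [Nat.card_Icc]; omega
  -- the annihilator polynomial
  set g : ℚ[X] := ∏ w ∈ W, (X - Polynomial.C (w:ℚ)) with hg
  have hgdeg : g.natDegree ≤ 4*k := by
    rw [hg, natDegree_prod]
    · simp only [natDegree_X_sub_C]
      rw [Finset.sum_const, smul_eq_mul, mul_one]
      exact hWcard
    · intro w _; exact X_sub_C_ne_zero _
  have hgroot : ∀ u : Fin (24 * k) → ZMod 2, u ∈ C → u ≠ 0 → g.eval ((hWt u : ℚ)) = 0 := by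
    intro u hu hu0
    rw [hg, eval_prod]
    apply Finset.prod_eq_zero (hWmem ⟨u, hu⟩ hu0)
    simp
  have hg0 : g.eval 0 ≠ 0 := by
    rw [hg, eval_prod]
    apply Finset.prod_ne_zero_iff.2
    intro w hw
    have hwpos : (0:ℚ) < (w:ℚ) := by exact_mod_cast hWpos w hw
    simp only [eval_sub, eval_X, eval_C]
    intro hcontra
    linarith
  obtain ⟨α, hα⟩ := span_Kp (24*k) (4*k) g hgdeg
  -- every coset contains a word of weight at most 4k
  have hcov : ∀ v : Fin (24 * k) → ZMod 2, ∃ c ∈ (C : Set (Fin (24 * k) → ZMod 2)), hWt (v - c) ≤ 4*k := by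
    intro v
    by_contra hcon
    push_neg at hcon
    set S : ℚ := ∑ u : ↥C,
        chi (∑ i, (u : Fin (24 * k) → ZMod 2) i * v i) * g.eval ((hWt (u : Fin (24 * k) → ZMod 2) : ℚ)) with hS
    have hS1 : S = g.eval 0 := by
      rw [hS, Finset.sum_eq_single (0 : ↥C)]
      · rw [show ((0:↥C) : Fin (24 * k) → ZMod 2) = 0 from rfl, hWt_zero]
        simp [chi_zero]
      · intro u _ hu
        have hu0 : (u : Fin (24 * k) → ZMod 2) ≠ 0 := fun h => hu (Subtype.ext h)
        rw [hgroot _ u.2 hu0, mul_zero]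
      · intro h; exact absurd (Finset.mem_univ _) h
    have hS2 : S = 0 := by
      have hrw : ∀ u : ↥C, g.eval ((hWt (u : Fin (24 * k) → ZMod 2) : ℚ))
          = ∑ i ∈ Finset.range (4*k+1),
              α i * (Kp (24*k) i).eval ((hWt (u : Fin (24 * k) → ZMod 2) : ℚ)) := by
        intro u
        conv_lhs => rw [hα]
        rw [eval_finset_sum]
        exact Finset.sum_congr rfl fun i _ => by rw [eval_mul, eval_C]
      have hkc : ∀ i : ℕ, ∀ u : ↥C, (Kp (24*k) i).eval ((hWt (u : Fin (24 * k) → ZMod 2) : ℚ))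
          = ∑ z ∈ Finset.univ.filter (fun z : Fin (24 * k) → ZMod 2 => hWt z = i),
              chi (∑ t, z t * (u : Fin (24 * k) → ZMod 2) t) := by
        intro i u
        have h := key_count ((u : Fin (24 * k) → ZMod 2)) i
        rw [hcard] at h
        exact h.symm
      rw [hS, Finset.sum_congr rfl fun u _ => by rw [hrw u, Finset.mul_sum]]
      rw [Finset.sum_comm]
      apply Finset.sum_eq_zero
      intro i hi
      rw [Finset.sum_congr rfl (fun u _ => by
        rw [hkc i u, mul_left_comm, Finset.mul_sum])]
      rw [← Finset.mul_sum, Finset.sum_comm]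
      apply mul_eq_zero_of_right
      apply Finset.sum_eq_zero
      intro z hz
      have hzwt : hWt z = i := (Finset.mem_filter.1 hz).2
      have hnotmem : v + z ∉ dual2 (C : Set (Fin (24 * k) → ZMod 2)) := by
        intro hmem
        have hvz : v + z ∈ (C : Set (Fin (24 * k) → ZMod 2)) := by rw [hsd']; exact hmem
        have h1 := hcon (v + z) hvz
        have h2 : v - (v + z) = z := by
          have h3 : v - (v + z) = -z := by ring
          rw [h3]
          funext t
          exact zmod2_neg (z t)
        rw [h2] at h1
        have := Finset.mem_range.1 hi
        omega
      have hcs := char_sum_zero C (v + z) hnotmem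
      rw [← hcs]
      refine Finset.sum_congr rfl fun u _ => ?_
      rw [← chi_add]
      congr 1
      rw [← Finset.sum_add_distrib]
      refine Finset.sum_congr rfl fun t _ => ?_
      show (u : Fin (24 * k) → ZMod 2) t * v t + z t * (u : Fin (24 * k) → ZMod 2) t
          = (u : Fin (24 * k) → ZMod 2) t * (v t + z t)
      ring
    rw [hS1] at hS2
    exact hg0 hS2
  exact Nat.sInf_le hcov

end CovAux

open Z4Note in
/-- a binary extremal doubly even self-dual code of length `24k` has
covering radius at most `4k`. -/
theorem covRad_le_of_extremal_length24k
    (k : ℕ) (hk : 0 < k)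
    (C : Submodule (ZMod 2) (Fin (24 * k) → ZMod 2))
    (hsd : SelfDual2 C)
    (hde : DoublyEven (C : Set (Fin (24 * k) → ZMod 2)))
    (hmin : minHam (C : Set (Fin (24 * k) → ZMod 2)) = 4 * k + 4) :
    covRad (C : Set (Fin (24 * k) → ZMod 2)) ≤ 4 * k := by
  exact CovAux.covRad_main k hk C hsd hde hmin
end

section
/- Let k be a positive integer, let C be a binary extremal doubly even self-dual code of length 24k (minimum Hamming weight 4k+4), and let D be a binary linear code of length 24k strictly containing C. Then D contains a non-zero vector of Hamming weight at most 4k. -/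
open Finset

namespace Z4Note
variable {ι : Type*} [Fintype ι]

section ExternalDistance
open Polynomial
variable [DecidableEq ι]
set_option linter.unusedSectionVars false
set_option maxHeartbeats 1000000

def supp (x : ι → ZMod 2) : Finset ι := Finset.univ.filter fun i => x i ≠ 0

lemma hWt_eq (x : ι → ZMod 2) : hWt x = (supp x).card := rfl

lemma inner_eq_card (u z : ι → ZMod 2) :
    (∑ i, u i * z i) = (((supp u ∩ supp z).card : ℕ) : ZMod 2) := by
  classical
  have h1 : (∑ i, u i * z i) = ∑ i ∈ univ.filter (fun i => u i * z i ≠ 0), u i * z i :=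
    (Finset.sum_filter_ne_zero _).symm
  have h2 : ∀ a b : ZMod 2, a * b ≠ 0 → a * b = 1 := by decide
  have h3 : univ.filter (fun i => u i * z i ≠ 0) = supp u ∩ supp z := by
    ext i
    simp only [mem_filter, mem_univ, true_and, supp, mem_inter]
    have : ∀ a b : ZMod 2, a * b ≠ 0 ↔ (a ≠ 0 ∧ b ≠ 0) := by decide
    rw [this]
  rw [h1, h3, Finset.sum_congr rfl (fun i hi => h2 _ _ (by
    rw [h3] at *
    simp only [supp, mem_inter, mem_filter, mem_univ, true_and] at hi
    have : ∀ a b : ZMod 2, a ≠ 0 → b ≠ 0 → a * b ≠ 0 := by decide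
    exact this _ _ hi.1 hi.2))]
  simp [Finset.sum_const]

def chi (u z : ι → ZMod 2) : ℚ := (-1) ^ ((∑ i, u i * z i).val)

lemma neg_one_pow_mod (a : ℕ) : ((-1 : ℚ)) ^ (a % 2) = (-1) ^ a := by
  conv_rhs => rw [← Nat.div_add_mod a 2]
  rw [pow_add, pow_mul]
  norm_num

lemma chi_eq_card (u z : ι → ZMod 2) :
    chi u z = (-1) ^ ((supp u ∩ supp z).card) := by
  rw [chi, inner_eq_card, ZMod.val_natCast, neg_one_pow_mod]

lemma chi_add_right (u v z : ι → ZMod 2) : chi u (v + z) = chi u v * chi u z := by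
  have h : (∑ i, u i * (v + z) i) = (∑ i, u i * v i) + (∑ i, u i * z i) := by
    rw [← Finset.sum_add_distrib]
    exact Finset.sum_congr rfl fun i _ => by simp [mul_add]
  rw [chi, h, ZMod.val_add, neg_one_pow_mod, pow_add, chi, chi]

lemma chi_comm (u z : ι → ZMod 2) : chi u z = chi z u := by
  rw [chi, chi, Finset.sum_congr rfl fun i _ => mul_comm (u i) (z i)]

lemma chi_add_left (u v z : ι → ZMod 2) : chi (u + v) z = chi u z * chi v z := by
  rw [chi_comm, chi_add_right, chi_comm z u, chi_comm z v]

lemma chi_zero_left (z : ι → ZMod 2) : chi 0 z = 1 := by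
  simp [chi]

lemma chi_of_ne (u z : ι → ZMod 2) (h : (∑ i, u i * z i) ≠ 0) : chi u z = -1 := by
  have : (∑ i, u i * z i).val = 1 := by
    have := h
    revert this
    generalize (∑ i, u i * z i) = a
    revert a; decide
  rw [chi, this, pow_one]

/-- indicator equivalence -/
def finsetEquiv : (ι → ZMod 2) ≃ Finset ι where
  toFun z := supp z
  invFun T := fun i => if i ∈ T then 1 else 0
  left_inv z := by
    funext i
    by_cases h : z i = 0 <;> simp [supp, h]
    · revert h; generalize z i = a; revert a; decide
  right_inv T := by
    ext i
    simp [supp]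

lemma supp_indicator (T : Finset ι) : supp (fun i => if i ∈ T then (1 : ZMod 2) else 0) = T := by
  ext i; simp [supp]

lemma step1 (g : ℕ → ℚ) (u : ι → ZMod 2) :
    ∑ z : ι → ZMod 2, g ((supp z).card) * chi u z
      = ∑ T : Finset ι, g T.card * (-1) ^ ((T ∩ supp u).card) := by
  apply Fintype.sum_equiv finsetEquiv
  intro z
  rw [chi_eq_card, Finset.inter_comm (supp u)]
  rfl

lemma step2 (F : Finset ι → ℚ) (S : Finset ι) :
    ∑ T : Finset ι, F T = ∑ p ∈ S.powerset ×ˢ Sᶜ.powerset, F (p.1 ∪ p.2) := by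
  rw [← Finset.powerset_univ]
  refine Finset.sum_nbij' (fun T => (T ∩ S, T \ S)) (fun p => p.1 ∪ p.2) ?_ ?_ ?_ ?_ ?_
  · intro T _
    simp only [Finset.mem_product, Finset.mem_powerset]
    exact ⟨Finset.inter_subset_right, fun i hi => by
      simp only [Finset.mem_compl]
      exact (Finset.mem_sdiff.1 hi).2⟩
  · intro p _
    simp [Finset.mem_powerset]
  · intro T _
    ext i
    simp only [Finset.mem_union, Finset.mem_inter, Finset.mem_sdiff]
    tauto
  · intro p hp
    simp only [Finset.mem_product, Finset.mem_powerset] at hp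
    obtain ⟨h1, h2⟩ := hp
    have h2' : ∀ i ∈ p.2, i ∉ S := fun i hi => Finset.mem_compl.1 (h2 hi)
    ext i
    · simp only [Finset.mem_inter, Finset.mem_union]
      constructor
      · rintro ⟨h | h, hS⟩
        · exact h
        · exact absurd hS (h2' i h)
      · intro h; exact ⟨Or.inl h, h1 h⟩
    · simp only [Finset.mem_sdiff, Finset.mem_union]
      constructor
      · rintro ⟨h | h, hS⟩
        · exact absurd (h1 h) hS
        · exact h
      · intro h; exact ⟨Or.inr h, h2' i h⟩
  · intro T _
    have h : T ∩ S ∪ T \ S = T := by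
      ext i
      simp only [Finset.mem_union, Finset.mem_inter, Finset.mem_sdiff]
      tauto
    show F T = F (T ∩ S ∪ T \ S)
    rw [h]


lemma card_union_of_mem (S : Finset ι) {A B : Finset ι} (hA : A ⊆ S) (hB : B ⊆ Sᶜ) :
    (A ∪ B).card = A.card + B.card := by
  rw [Finset.card_union_of_disjoint]
  exact Finset.disjoint_left.2 fun i hiA hiB => Finset.mem_compl.1 (hB hiB) (hA hiA)

lemma inter_left_of_mem (S : Finset ι) {A B : Finset ι} (hA : A ⊆ S) (hB : B ⊆ Sᶜ) :
    (A ∪ B) ∩ S = A := by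
  ext i
  simp only [Finset.mem_inter, Finset.mem_union]
  constructor
  · rintro ⟨h | h, hS⟩
    · exact h
    · exact absurd hS (Finset.mem_compl.1 (hB h))
  · intro h; exact ⟨Or.inl h, hA h⟩

lemma step3 (g : ℕ → ℚ) (u : ι → ZMod 2) :
    ∑ z : ι → ZMod 2, g ((supp z).card) * chi u z
      = ∑ i ∈ Finset.range ((supp u).card + 1),
          ∑ j ∈ Finset.range ((Fintype.card ι - (supp u).card) + 1),
            ((supp u).card.choose i) • (((Fintype.card ι - (supp u).card).choose j) •
              ((-1 : ℚ) ^ i * g (i + j))) := by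
  set S := supp u with hS
  rw [step1, step2 _ S, Finset.sum_product]
  have hinner : ∀ A ∈ S.powerset,
      (∑ B ∈ Sᶜ.powerset, g ((A ∪ B).card) * (-1) ^ (((A ∪ B) ∩ S).card))
        = ∑ j ∈ Finset.range (Sᶜ.card + 1),
            (Sᶜ.card.choose j) • ((-1 : ℚ) ^ A.card * g (A.card + j)) := by
    intro A hA
    have hA' := Finset.mem_powerset.1 hA
    rw [← Finset.sum_powerset_apply_card (fun b => (-1 : ℚ) ^ A.card * g (A.card + b)) (x := Sᶜ)]
    refine Finset.sum_congr rfl fun B hB => ?_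
    have hB' := Finset.mem_powerset.1 hB
    rw [card_union_of_mem S hA' hB', inter_left_of_mem S hA' hB', mul_comm]
  rw [Finset.sum_congr rfl hinner,
    Finset.sum_powerset_apply_card
      (fun a => ∑ j ∈ Finset.range (Sᶜ.card + 1), (Sᶜ.card.choose j) •
        ((-1 : ℚ) ^ a * g (a + j))) (x := S)]
  rw [Finset.card_compl]
  refine Finset.sum_congr rfl fun i _ => ?_
  rw [Finset.smul_sum]

noncomputable def Kpoly (n t : ℕ) : ℚ[X] :=
  ∑ i ∈ Finset.range (t + 1),
    ((-1 : ℚ) ^ i * (t.choose i)) •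
      (descPochhammer ℚ i * (descPochhammer ℚ (t - i)).comp ((n : ℚ[X]) - X))

lemma natDegree_nX_sub_X (n : ℕ) : ((n : ℚ[X]) - X).natDegree = 1 := by
  have : (n : ℚ[X]) - X = -(X - Polynomial.C (n : ℚ)) := by
    rw [neg_sub]
    simp [Polynomial.C_eq_natCast]
  rw [this, natDegree_neg, natDegree_X_sub_C]

lemma leadingCoeff_nX_sub_X (n : ℕ) : ((n : ℚ[X]) - X).leadingCoeff = -1 := by
  have : (n : ℚ[X]) - X = -(X - Polynomial.C (n : ℚ)) := by
    rw [neg_sub]; simp [Polynomial.C_eq_natCast]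
  rw [this, leadingCoeff_neg, leadingCoeff_X_sub_C]

lemma natDegree_dPcomp (n j : ℕ) :
    ((descPochhammer ℚ j).comp ((n : ℚ[X]) - X)).natDegree = j := by
  rw [natDegree_comp, descPochhammer_natDegree, natDegree_nX_sub_X, mul_one]

lemma leadingCoeff_dPcomp (n j : ℕ) :
    ((descPochhammer ℚ j).comp ((n : ℚ[X]) - X)).leadingCoeff = (-1) ^ j := by
  rcases Nat.eq_zero_or_pos j with rfl | hj
  · simp [descPochhammer_zero]
  · rw [leadingCoeff_comp (by rw [natDegree_nX_sub_X]; norm_num),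
      (monic_descPochhammer ℚ j).leadingCoeff, leadingCoeff_nX_sub_X, one_mul,
      descPochhammer_natDegree]

lemma Kpoly_natDegree_le (n t : ℕ) : (Kpoly n t).natDegree ≤ t := by
  refine (Polynomial.natDegree_sum_le _ _).trans ?_
  rw [Finset.fold_max_le]
  refine ⟨Nat.zero_le _, fun i hi => ?_⟩
  rw [Finset.mem_range, Nat.lt_succ_iff] at hi
  refine (natDegree_smul_le _ _).trans ?_
  refine (natDegree_mul_le).trans ?_
  rw [descPochhammer_natDegree, natDegree_dPcomp]
  omega

lemma coeff_term (n t i : ℕ) (hi : i ≤ t) :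
    (descPochhammer ℚ i * (descPochhammer ℚ (t - i)).comp ((n : ℚ[X]) - X)).coeff t
      = (-1) ^ (t - i) := by
  have h1 : (descPochhammer ℚ i).natDegree = i := descPochhammer_natDegree ℚ i
  have h2 := natDegree_dPcomp n (t - i)
  have := Polynomial.coeff_mul_degree_add_degree (descPochhammer ℚ i)
    ((descPochhammer ℚ (t - i)).comp ((n : ℚ[X]) - X))
  rw [h1, h2] at this
  rw [show i + (t - i) = t by omega] at this
  rw [this, (monic_descPochhammer ℚ i).leadingCoeff, one_mul]
  exact leadingCoeff_dPcomp n (t - i)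

lemma Kpoly_coeff_self (n t : ℕ) : (Kpoly n t).coeff t = (-1) ^ t * 2 ^ t := by
  rw [Kpoly, Polynomial.finset_sum_coeff]
  have : ∀ i ∈ Finset.range (t + 1),
      (((-1 : ℚ) ^ i * (t.choose i)) •
        (descPochhammer ℚ i * (descPochhammer ℚ (t - i)).comp ((n : ℚ[X]) - X))).coeff t
      = (-1 : ℚ) ^ t * (t.choose i) := by
    intro i hi
    rw [Finset.mem_range, Nat.lt_succ_iff] at hi
    rw [Polynomial.coeff_smul, coeff_term n t i hi, smul_eq_mul]
    have hpow : (-1 : ℚ) ^ i * (-1) ^ (t - i) = (-1) ^ t := by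
      rw [← pow_add, show i + (t - i) = t by omega]
    linear_combination (t.choose i : ℚ) * hpow
  rw [Finset.sum_congr rfl this, ← Finset.mul_sum]
  congr 1
  rw [← Nat.cast_sum, Nat.sum_range_choose]
  push_cast
  ring

lemma Kpoly_eval (n t m : ℕ) (hm : m ≤ n) :
    (Kpoly n t).eval (m : ℚ)
      = ∑ i ∈ Finset.range (t + 1),
          (-1 : ℚ) ^ i * (t.choose i) * (m.descFactorial i) * ((n - m).descFactorial (t - i)) := by
  rw [Kpoly, Polynomial.eval_finset_sum]
  refine Finset.sum_congr rfl fun i _ => ?_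
  rw [Polynomial.eval_smul, smul_eq_mul, Polynomial.eval_mul, Polynomial.eval_comp]
  have : Polynomial.eval (m : ℚ) ((n : ℚ[X]) - X) = ((n - m : ℕ) : ℚ) := by
    rw [Nat.cast_sub hm]
    simp
  rw [this, descPochhammer_eval_eq_descFactorial, descPochhammer_eval_eq_descFactorial]
  ring

lemma cast_choose_factorial (m n' t i : ℕ) (hi : i ≤ t) :
    ((m.choose i : ℚ)) * (n'.choose (t - i)) * (Nat.factorial t)
      = (t.choose i) * (m.descFactorial i) * (n'.descFactorial (t - i)) := by
  have h : t.choose i * (m.descFactorial i) * (n'.descFactorial (t - i))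
      = (t.choose i * (Nat.factorial i) * (Nat.factorial (t-i))) * (m.choose i * n'.choose (t - i)) := by
    rw [Nat.descFactorial_eq_factorial_mul_choose, Nat.descFactorial_eq_factorial_mul_choose]
    ring
  have h2 := Nat.choose_mul_factorial_mul_factorial hi
  have hN : m.choose i * n'.choose (t - i) * (Nat.factorial t)
      = t.choose i * m.descFactorial i * n'.descFactorial (t - i) := by
    rw [h, ← h2]; ring
  exact_mod_cast congrArg (Nat.cast : ℕ → ℚ) hN

lemma transform (s : ℕ) (hs : s ≤ Fintype.card ι) (γ : ℕ → ℚ)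
    (hγ : ∀ t, s < t → γ t = 0) (u : ι → ZMod 2) :
    ∑ z : ι → ZMod 2, (γ (hWt z) * Nat.factorial (hWt z)) * chi u z
      = ∑ t ∈ Finset.range (s + 1), γ t * (Kpoly (Fintype.card ι) t).eval ((hWt u : ℚ)) := by
  classical
  set n := Fintype.card ι with hn
  set m := hWt u with hmdef
  have hm : m ≤ n := by
    rw [hmdef, hWt_eq, hn]
    exact (Finset.card_le_card (Finset.subset_univ _)).trans_eq (Finset.card_univ)
  set g : ℕ → ℚ := fun t => γ t * (Nat.factorial t) with hg
  set f : ℕ × ℕ → ℚ :=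
    fun p => (-1 : ℚ) ^ p.1 * (m.choose p.1) * ((n - m).choose p.2) * g (p.1 + p.2) with hf
  have h1 : ∑ z : ι → ZMod 2, (γ (hWt z) * Nat.factorial (hWt z)) * chi u z
      = ∑ p ∈ (Finset.range (m + 1)) ×ˢ (Finset.range (n - m + 1)), f p := by
    rw [show (fun z : ι → ZMod 2 => (γ (hWt z) * Nat.factorial (hWt z)) * chi u z)
        = fun z => g ((supp z).card) * chi u z from rfl]
    rw [step3]
    rw [Finset.sum_product]
    simp only [← hWt_eq, ← hmdef, ← hn]
    refine Finset.sum_congr rfl fun i _ => Finset.sum_congr rfl fun j _ => ?_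
    simp only [hf, nsmul_eq_mul]
    ring
  -- extend to range (n+1) × range (n+1)
  have h2 : ∑ p ∈ (Finset.range (m + 1)) ×ˢ (Finset.range (n - m + 1)), f p
      = ∑ p ∈ (Finset.range (n + 1)) ×ˢ (Finset.range (n + 1)), f p := by
    refine Finset.sum_subset ?_ ?_
    · refine Finset.product_subset_product ?_ ?_ <;>
        exact Finset.range_subset_range.2 (by omega)
    · intro p hp hnp
      simp only [Finset.mem_product, Finset.mem_range] at hp hnp
      rw [not_and_or] at hnp
      rcases hnp with h | h
      · have : m < p.1 := by omega
        simp [hf, Nat.choose_eq_zero_of_lt this]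
      · have : n - m < p.2 := by omega
        simp [hf, Nat.choose_eq_zero_of_lt this]
  -- restrict to small total degree
  have h3 : ∑ p ∈ (Finset.range (n + 1)) ×ˢ (Finset.range (n + 1)), f p
      = ∑ p ∈ ((Finset.range (n + 1)) ×ˢ (Finset.range (n + 1))).filter
          (fun p => p.1 + p.2 ≤ s), f p := by
    refine (Finset.sum_filter_of_ne ?_).symm
    intro p _ hne
    by_contra hps
    exact hne (by simp [hf, hg, hγ _ (by omega : s < p.1 + p.2)])
  -- bijection with sigma
  have h4 : ∑ p ∈ ((Finset.range (n + 1)) ×ˢ (Finset.range (n + 1))).filter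
          (fun p => p.1 + p.2 ≤ s), f p
      = ∑ q ∈ (Finset.range (s + 1)).sigma (fun t => Finset.range (t + 1)),
          ((-1 : ℚ) ^ q.2 * (m.choose q.2) * ((n - m).choose (q.1 - q.2)) * g q.1) := by
    refine Finset.sum_nbij' (fun p => ⟨p.1 + p.2, p.1⟩) (fun q => (q.2, q.1 - q.2)) ?_ ?_ ?_ ?_ ?_
    · intro p hp
      simp only [Finset.mem_filter, Finset.mem_product, Finset.mem_range] at hp
      simp only [Finset.mem_sigma, Finset.mem_range]
      omega
    · intro q hq
      obtain ⟨t, i⟩ := q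
      simp only [Finset.mem_sigma, Finset.mem_range] at hq
      simp only [Finset.mem_filter, Finset.mem_product, Finset.mem_range]
      omega
    · intro p hp; simp
    · intro q hq
      obtain ⟨t, i⟩ := q
      simp only [Finset.mem_sigma, Finset.mem_range] at hq
      simp only [Sigma.mk.inj_iff]
      exact ⟨by omega, heq_of_eq rfl⟩
    · intro p hp
      simp only [hf, Nat.add_sub_cancel_left]
  rw [h1, h2, h3, h4, Finset.sum_sigma]
  refine Finset.sum_congr rfl fun t ht => ?_
  rw [Finset.mem_range, Nat.lt_succ_iff] at ht
  rw [Kpoly_eval n t m hm, Finset.mul_sum]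
  refine Finset.sum_congr rfl fun i hi => ?_
  rw [Finset.mem_range, Nat.lt_succ_iff] at hi
  have := cast_choose_factorial m (n - m) t i hi
  simp only [hg]
  calc (-1 : ℚ) ^ i * (m.choose i) * ((n - m).choose (t - i)) * (γ t * (Nat.factorial t))
      = ((m.choose i : ℚ) * ((n - m).choose (t - i)) * (Nat.factorial t)) * ((-1) ^ i * γ t) := by ring
    _ = ((t.choose i : ℚ) * (m.descFactorial i) * ((n - m).descFactorial (t - i)))
          * ((-1) ^ i * γ t) := by rw [this]
    _ = γ t * ((-1 : ℚ) ^ i * (t.choose i) * (m.descFactorial i)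
          * ((n - m).descFactorial (t - i))) := by ring

lemma add_self_zero (x : ι → ZMod 2) : x + x = 0 := by
  funext i
  have : ∀ a : ZMod 2, a + a = 0 := by decide
  exact this (x i)

noncomputable def codeFinset (C : Submodule (ZMod 2) (ι → ZMod 2)) :
    Finset (ι → ZMod 2) := (Set.toFinite (C : Set (ι → ZMod 2))).toFinset

lemma mem_codeFinset {C : Submodule (ZMod 2) (ι → ZMod 2)} {u : ι → ZMod 2} :
    u ∈ codeFinset C ↔ u ∈ C := by
  simp [codeFinset, Set.Finite.mem_toFinset]

lemma sum_chi_eq_card (C : Submodule (ZMod 2) (ι → ZMod 2)) (y : ι → ZMod 2)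
    (h : ∀ c ∈ C, ∑ i, c i * y i = 0) :
    ∑ u ∈ codeFinset C, chi u y = ((codeFinset C).card : ℚ) := by
  rw [Finset.sum_congr rfl (fun u hu => ?_), Finset.sum_const, nsmul_eq_mul, mul_one]
  rw [chi, h u (mem_codeFinset.1 hu)]
  norm_num

lemma sum_chi_eq_zero (C : Submodule (ZMod 2) (ι → ZMod 2)) (y c₀ : ι → ZMod 2)
    (hc₀ : c₀ ∈ C) (hne : (∑ i, c₀ i * y i) ≠ 0) :
    ∑ u ∈ codeFinset C, chi u y = 0 := by
  have key : ∑ u ∈ codeFinset C, chi u y = ∑ u ∈ codeFinset C, chi (u + c₀) y := by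
    refine Finset.sum_nbij' (fun u => u + c₀) (fun u => u + c₀) ?_ ?_ ?_ ?_ ?_
    · intro u hu
      exact mem_codeFinset.2 (C.add_mem (mem_codeFinset.1 hu) hc₀)
    · intro u hu
      exact mem_codeFinset.2 (C.add_mem (mem_codeFinset.1 hu) hc₀)
    · intro u _; show u + c₀ + c₀ = u; rw [add_assoc, add_self_zero, add_zero]
    · intro u _; show u + c₀ + c₀ = u; rw [add_assoc, add_self_zero, add_zero]
    · intro u _
      show chi u y = chi (u + c₀ + c₀) y
      rw [add_assoc, add_self_zero, add_zero]
  have hterm : ∀ u, chi (u + c₀) y = - chi u y := by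
    intro u
    rw [show chi (u + c₀) y = chi y (u + c₀) from by
          rw [chi, chi, Finset.sum_congr rfl fun i _ => mul_comm _ _],
      chi_add_right, show chi y u = chi u y from by
          rw [chi, chi, Finset.sum_congr rfl fun i _ => mul_comm _ _],
      show chi y c₀ = chi c₀ y from by
          rw [chi, chi, Finset.sum_congr rfl fun i _ => mul_comm _ _],
      chi_of_ne c₀ y hne]
    ring
  rw [Finset.sum_congr rfl (fun u _ => hterm u), Finset.sum_neg_distrib] at key
  linarith

lemma exists_low_weight (C : Submodule (ZMod 2) (ι → ZMod 2))
    (hsd : (C : Set (ι → ZMod 2)) = dual2 (C : Set (ι → ZMod 2)))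
    (W : Finset ℕ) (hW : ∀ c ∈ C, c ≠ 0 → hWt c ∈ W) (hW0 : 0 ∉ W)
    (hsn : W.card ≤ Fintype.card ι)
    (v : ι → ZMod 2) (hv : v ∉ C) :
    ∃ c ∈ C, hWt (v + c) ≤ W.card := by
  classical
  set n := Fintype.card ι with hn
  set s := W.card with hscard
  -- find a nonzero kernel relation among the Kpoly evaluations on W
  have hdep : ¬ LinearIndependent ℚ
      (fun (t : Fin (s+1)) => (fun w : ↥W => (Kpoly n t).eval ((w : ℕ) : ℚ))) := by
    intro h
    have hle := h.fintype_card_le_finrank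
    rw [Module.finrank_pi, Fintype.card_coe, Fintype.card_fin] at hle
    omega
  obtain ⟨γ', hrel, t₁, ht₁⟩ := Fintype.not_linearIndependent_iff.1 hdep
  set P : ℚ[X] := ∑ t : Fin (s+1), γ' t • Kpoly n t with hP
  have hPeval : ∀ x : ℚ, P.eval x = ∑ t : Fin (s+1), γ' t * (Kpoly n t).eval x := by
    intro x
    rw [hP, Polynomial.eval_finset_sum]
    exact Finset.sum_congr rfl fun t _ => by rw [Polynomial.eval_smul, smul_eq_mul]
  have hPW : ∀ w ∈ W, P.eval ((w : ℕ) : ℚ) = 0 := by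
    intro w hw
    have := congrFun hrel ⟨w, hw⟩
    rw [hPeval]
    simpa using this
  have hPdeg : P.natDegree ≤ s := by
    refine (Polynomial.natDegree_sum_le _ _).trans ?_
    rw [Finset.fold_max_le]
    refine ⟨Nat.zero_le _, fun t _ => ?_⟩
    exact (Polynomial.natDegree_smul_le _ _).trans ((Kpoly_natDegree_le n t).trans
      (by omega : (t : ℕ) ≤ s))
  have hPne : P ≠ 0 := by
    have hne : (Finset.univ.filter (fun t : Fin (s+1) => γ' t ≠ 0)).Nonempty :=
      ⟨t₁, by simpa using ht₁⟩
    set t₀ := (Finset.univ.filter (fun t : Fin (s+1) => γ' t ≠ 0)).max' hne with ht₀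
    have ht₀mem := (Finset.univ.filter (fun t : Fin (s+1) => γ' t ≠ 0)).max'_mem hne
    rw [Finset.mem_filter] at ht₀mem
    have hcoeff : P.coeff (t₀ : ℕ) = γ' t₀ * ((-1) ^ (t₀ : ℕ) * 2 ^ (t₀ : ℕ)) := by
      rw [hP, Polynomial.finset_sum_coeff]
      rw [Finset.sum_eq_single t₀]
      · rw [Polynomial.coeff_smul, Kpoly_coeff_self, smul_eq_mul]
      · intro t _ htne
        rcases eq_or_ne (γ' t) 0 with h | h
        · simp [h]
        · have hle : t ≤ t₀ := Finset.le_max' _ t (Finset.mem_filter.2 ⟨Finset.mem_univ _, h⟩)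
          have hlt : (t : ℕ) < (t₀ : ℕ) := by
            rcases lt_or_eq_of_le hle with h' | h'
            · exact h'
            · exact absurd h' htne
          rw [Polynomial.coeff_smul,
            Polynomial.coeff_eq_zero_of_natDegree_lt ((Kpoly_natDegree_le n t).trans_lt hlt),
            smul_zero]
      · intro h; exact absurd (Finset.mem_univ t₀) h
    intro h0
    rw [h0, Polynomial.coeff_zero] at hcoeff
    have h2 : ((-1 : ℚ) ^ (t₀ : ℕ) * 2 ^ (t₀ : ℕ)) ≠ 0 := by
      apply mul_ne_zero
      · exact pow_ne_zero _ (by norm_num)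
      · exact pow_ne_zero _ (by norm_num)
    exact ht₀mem.2 (by
      rcases mul_eq_zero.1 hcoeff.symm with h | h
      · exact h
      · exact absurd h h2)
  have hP0 : P.eval 0 ≠ 0 := by
    intro h0
    have : P = 0 := by
      refine Polynomial.eq_zero_of_natDegree_lt_card_of_eval_eq_zero' P
        (insert (0 : ℚ) (W.image (fun w : ℕ => (w : ℚ)))) ?_ ?_
      · intro x hx
        rcases Finset.mem_insert.1 hx with h | hx
        · rw [h]; exact h0
        · obtain ⟨w', hw', hwe⟩ := Finset.mem_image.1 hx
          rw [← hwe]; exact hPW w' hw'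
      · have hcim : (W.image (fun w : ℕ => (w : ℚ))).card = W.card :=
          Finset.card_image_of_injective _ (fun a b h => Nat.cast_injective h)
        have h0img : (0 : ℚ) ∉ W.image (fun w : ℕ => (w : ℚ)) := by
          intro h
          obtain ⟨w', hw', hw0⟩ := Finset.mem_image.1 h
          have hz : w' = 0 := Nat.cast_injective hw0
          exact hW0 (hz ▸ hw')
        rw [Finset.card_insert_of_notMem h0img, hcim]
        omega
    exact hPne this
  -- the coefficient function
  set γ : ℕ → ℚ := fun t => if h : t < s + 1 then γ' ⟨t, h⟩ else 0 with hγdef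
  have hγ : ∀ t, s < t → γ t = 0 := fun t ht => by
    rw [hγdef]; exact dif_neg (by omega)
  set g : (ι → ZMod 2) → ℚ := fun z => γ (hWt z) * Nat.factorial (hWt z) with hg
  have htrans : ∀ u : ι → ZMod 2, ∑ z : ι → ZMod 2, g z * chi u z = P.eval ((hWt u : ℚ)) := by
    intro u
    rw [show ∑ z : ι → ZMod 2, g z * chi u z
        = ∑ z : ι → ZMod 2, (γ (hWt z) * Nat.factorial (hWt z)) * chi u z from rfl,
      transform s hsn γ hγ u, hPeval]
    rw [← Fin.sum_univ_eq_sum_range (fun t => γ t * (Kpoly n t).eval ((hWt u : ℚ))) (s+1)]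
    refine Finset.sum_congr rfl fun t _ => ?_
    congr 1
    rw [hγdef]
    simp [Fin.is_lt]
    intro h; exact absurd t.is_lt (by omega)
  -- double counting
  have way2 : ∑ u ∈ codeFinset C, ∑ z : ι → ZMod 2, g z * chi u (v + z) = P.eval 0 := by
    rw [Finset.sum_eq_single_of_mem (0 : ι → ZMod 2) (mem_codeFinset.2 C.zero_mem)]
    · have h0 : hWt (0 : ι → ZMod 2) = 0 := by simp [hWt]
      rw [show ∑ z : ι → ZMod 2, g z * chi 0 (v + z) = ∑ z : ι → ZMod 2, g z * chi 0 z from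
        Finset.sum_congr rfl fun z _ => by rw [chi_zero_left, chi_zero_left], htrans, h0]
      norm_num
    · intro u hu hune
      have hcalc : ∑ z : ι → ZMod 2, g z * chi u (v + z)
          = chi u v * ∑ z : ι → ZMod 2, g z * chi u z := by
        rw [Finset.mul_sum]
        refine Finset.sum_congr rfl fun z _ => ?_
        rw [chi_add_right]
        ring
      rw [hcalc, htrans, hPW _ (hW u (mem_codeFinset.1 hu) hune), mul_zero]
  have way1 : ∑ u ∈ codeFinset C, ∑ z : ι → ZMod 2, g z * chi u (v + z)
      = ((codeFinset C).card : ℚ) * ∑ c ∈ codeFinset C, g (v + c) := by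
    rw [Finset.sum_comm]
    have hinner : ∀ z : ι → ZMod 2,
        ∑ u ∈ codeFinset C, g z * chi u (v + z)
          = if v + z ∈ C then g z * ((codeFinset C).card : ℚ) else 0 := by
      intro z
      rw [← Finset.mul_sum]
      by_cases hmem : v + z ∈ C
      · rw [if_pos hmem, sum_chi_eq_card C (v + z) ?_]
        intro c hc
        have hd : v + z ∈ dual2 (C : Set (ι → ZMod 2)) := by
          rw [← hsd]; exact hmem
        have := hd c hc
        rwa [Finset.sum_congr rfl fun i _ => mul_comm ((v+z) i) (c i)] at this
      · rw [if_neg hmem]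
        have hmem' : v + z ∉ dual2 (C : Set (ι → ZMod 2)) := by
          rw [← hsd]; exact hmem
        have hex : ¬ ∀ y ∈ (C : Set (ι → ZMod 2)), ∑ i, (v + z) i * y i = 0 := hmem'
        push_neg at hex
        obtain ⟨c₀, hc₀, hne⟩ := hex
        rw [mul_eq_zero]
        right
        refine sum_chi_eq_zero C (v + z) c₀ hc₀ ?_
        rwa [Finset.sum_congr rfl fun i _ => mul_comm (c₀ i) ((v+z) i)]
    rw [Finset.sum_congr rfl fun z _ => hinner z, Finset.sum_ite, Finset.sum_const_zero, add_zero]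
    have hbij : ∑ z ∈ Finset.univ.filter (fun z => v + z ∈ C), g z * ((codeFinset C).card : ℚ)
        = ∑ c ∈ codeFinset C, g (v + c) * ((codeFinset C).card : ℚ) := by
      refine Finset.sum_nbij' (fun z => v + z) (fun c => v + c) ?_ ?_ ?_ ?_ ?_
      · intro z hz
        exact mem_codeFinset.2 ((Finset.mem_filter.1 hz).2)
      · intro c hc
        refine Finset.mem_filter.2 ⟨Finset.mem_univ _, ?_⟩
        rw [← add_assoc, add_self_zero, zero_add]
        exact mem_codeFinset.1 hc
      · intro z _; show v + (v + z) = z; rw [← add_assoc, add_self_zero, zero_add]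
      · intro c _; show v + (v + c) = c; rw [← add_assoc, add_self_zero, zero_add]
      · intro z _
        show g z * ((codeFinset C).card : ℚ) = g (v + (v + z)) * ((codeFinset C).card : ℚ)
        rw [← add_assoc, add_self_zero, zero_add]
    rw [hbij, ← Finset.sum_mul]
    ring
  rw [way1] at way2
  have hcard0 : ((codeFinset C).card : ℚ) ≠ 0 := by
    have : (0 : ι → ZMod 2) ∈ codeFinset C := mem_codeFinset.2 C.zero_mem
    have hpos : 0 < (codeFinset C).card := Finset.card_pos.2 ⟨0, this⟩
    exact_mod_cast hpos.ne'
  have hsum : ∑ c ∈ codeFinset C, g (v + c) ≠ 0 := by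
    intro h
    rw [h, mul_zero] at way2
    exact hP0 way2.symm
  obtain ⟨c, hc, hgc⟩ := Finset.exists_ne_zero_of_sum_ne_zero hsum
  refine ⟨c, mem_codeFinset.1 hc, ?_⟩
  by_contra hbig
  push_neg at hbig
  rw [hg] at hgc
  simp only at hgc
  exact hgc (by rw [hγ _ hbig, zero_mul])

lemma hWt_le (x : ι → ZMod 2) : hWt x ≤ Fintype.card ι := by
  rw [hWt_eq]
  exact (Finset.card_le_card (Finset.subset_univ _)).trans_eq Finset.card_univ

lemma sum_coords (y : ι → ZMod 2) : ∑ i, y i = ((hWt y : ℕ) : ZMod 2) := by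
  have h := inner_eq_card (fun _ => (1 : ZMod 2)) y
  have h1 : supp (fun _ : ι => (1 : ZMod 2)) = Finset.univ := by
    ext i; simp [supp]
  rw [h1, Finset.univ_inter, ← hWt_eq] at h
  rw [← h]
  exact Finset.sum_congr rfl fun i _ => (one_mul (y i)).symm

lemma hWt_compl (c : ι → ZMod 2) :
    hWt ((fun _ => 1) + c) = Fintype.card ι - hWt c := by
  rw [hWt_eq, hWt_eq]
  have hsupp : supp ((fun _ => 1) + c) = (supp c)ᶜ := by
    ext i
    have hz : ∀ a : ZMod 2, (1 + a ≠ 0) ↔ ¬(a ≠ 0) := by decide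
    simp only [supp, Finset.mem_filter, Finset.mem_univ, true_and, Finset.mem_compl,
      Pi.add_apply]
    exact hz (c i)
  rw [hsupp, Finset.card_compl]

end ExternalDistance

end Z4Note

open Z4Note in
/-- any binary linear code strictly containing a binary extremal doubly
even self-dual code of length `24k` contains a nonzero vector of weight at most `4k`. -/
theorem exists_small_weight_of_strict_supercode
    (k : ℕ) (hk : 0 < k)
    (C : Submodule (ZMod 2) (Fin (24 * k) → ZMod 2))
    (hsd : SelfDual2 C)
    (hde : DoublyEven (C : Set (Fin (24 * k) → ZMod 2)))
    (hmin : minHam (C : Set (Fin (24 * k) → ZMod 2)) = 4 * k + 4)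
    (D : Submodule (ZMod 2) (Fin (24 * k) → ZMod 2))
    (hCD : C < D) :
    ∃ v ∈ D, v ≠ 0 ∧ hWt v ≤ 4 * k := by
  classical
  have hsd' : (C : Set (Fin (24 * k) → ZMod 2)) = dual2 (C : Set (Fin (24 * k) → ZMod 2)) := hsd
  -- minimum-weight lower bound
  have hmw : ∀ c ∈ C, c ≠ 0 → 4 * k + 4 ≤ hWt c := by
    intro c hc hc0
    have hle : minHam (C : Set (Fin (24 * k) → ZMod 2)) ≤ hWt c :=
      Nat.sInf_le ⟨c, hc, hc0, rfl⟩
    omega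
  have hwle : ∀ c : Fin (24 * k) → ZMod 2, hWt c ≤ 24 * k := by
    intro c
    have := hWt_le c
    rwa [Fintype.card_fin] at this
  -- the all-ones vector is in C
  have hones : (fun _ => (1 : ZMod 2)) ∈ C := by
    have : (fun _ => (1 : ZMod 2)) ∈ dual2 (C : Set (Fin (24 * k) → ZMod 2)) := by
      intro y hy
      have h1 : ∑ i, (fun _ => (1 : ZMod 2)) i * y i = ∑ i, y i :=
        Finset.sum_congr rfl fun i _ => one_mul (y i)
      obtain ⟨r, hr⟩ := hde y hy
      rw [h1, sum_coords, hr]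
      push_cast
      rw [show ((4 : ZMod 2)) = 0 from rfl]
      ring
    rw [← hsd'] at this
    exact this
  have hones_wt : hWt (fun _ : Fin (24 * k) => (1 : ZMod 2)) = 24 * k := by
    rw [hWt_eq]
    have : supp (fun _ : Fin (24 * k) => (1 : ZMod 2)) = Finset.univ := by
      ext i; simp [supp]
    rw [this, Finset.card_univ, Fintype.card_fin]
  -- the finite set of possible nonzero weights
  set W : Finset ℕ :=
    ((Finset.range (4 * k - 1)).image (fun j => 4 * k + 4 + 4 * j)) ∪ {24 * k} with hWdef
  have hW : ∀ c ∈ C, c ≠ 0 → hWt c ∈ W := by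
    intro c hc hc0
    by_cases hco : c = fun _ => (1 : ZMod 2)
    · rw [hco, hones_wt]
      exact Finset.mem_union_right _ (Finset.mem_singleton_self _)
    · have h4 : 4 ∣ hWt c := hde c hc
      have hge : 4 * k + 4 ≤ hWt c := hmw c hc hc0
      have hle24 : hWt c ≤ 24 * k := hwle c
      -- the complement
      have hcc : ((fun _ => (1 : ZMod 2)) + c) ∈ C := C.add_mem hones hc
      have hcc0 : ((fun _ => (1 : ZMod 2)) + c) ≠ 0 := by
        intro h0
        apply hco
        have h := congrArg (fun x => (fun _ : Fin (24 * k) => (1 : ZMod 2)) + x) h0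
        simp only at h
        rw [← add_assoc, add_self_zero, zero_add, add_zero] at h
        exact h
      have hgec : 4 * k + 4 ≤ hWt ((fun _ => (1 : ZMod 2)) + c) := hmw _ hcc hcc0
      rw [hWt_compl, Fintype.card_fin] at hgec
      have hle20 : hWt c ≤ 20 * k - 4 := by omega
      obtain ⟨q, hq⟩ := h4
      refine Finset.mem_union_left _ (Finset.mem_image.2 ⟨q - (k + 1), ?_, ?_⟩)
      · rw [Finset.mem_range]; omega
      · omega
  have hW0 : 0 ∉ W := by
    rw [hWdef]
    simp only [Finset.mem_union, Finset.mem_image, Finset.mem_range, Finset.mem_singleton]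
    push_neg
    constructor
    · intro j _; omega
    · omega
  have hcard : W.card ≤ 4 * k := by
    refine (Finset.card_union_le _ _).trans ?_
    have h1 : ((Finset.range (4 * k - 1)).image (fun j => 4 * k + 4 + 4 * j)).card ≤ 4 * k - 1 :=
      (Finset.card_image_le).trans_eq (Finset.card_range _)
    have h2 : ({24 * k} : Finset ℕ).card = 1 := Finset.card_singleton _
    omega
  have hsn : W.card ≤ Fintype.card (Fin (24 * k)) := by
    rw [Fintype.card_fin]; omega
  obtain ⟨v, hvD, hvC⟩ := SetLike.exists_of_lt hCD
  obtain ⟨c, hc, hwt⟩ := exists_low_weight C hsd' W hW hW0 hsn v hvC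
  refine ⟨v + c, D.add_mem hvD (le_of_lt hCD hc), ?_, hwt.trans hcard⟩
  intro h0
  have hv_eq : v = c := by
    have h := congrArg (fun x => x + c) h0
    rw [add_assoc, add_self_zero, add_zero, zero_add] at h
    exact h
  exact hvC (hv_eq ▸ hc)
end
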